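/- arXiv:1311.5127 — 7 statements merged into one kernel-verified Lean document; each statement's English description precedes it below -/
import Mathlib

section
/- (Virial Theorem, eigenvector form) Let U be a unitary operator on a complex Hilbert space H which is of class C^1(A) for a self-adjoint operator A with dense domain D(A). If φ and ψ are eigenvectors of U associated with the same eigenvalue, then ⟨φ, (U*AU − A)ψ⟩ = 0. In particular, if φ is an eigenvector of U, then ⟨φ, (U*AU − A)φ⟩ = 0. -/
set_option linter.unusedSectionVars false
variable {H : Type} [NormedAddCommGroup H] [InnerProductSpace ℂ H] [CompleteSpace H]

local notation "⟪" x ", " y "⟫" => @inner ℂ _ _ x y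

namespace Virial

/-- membership in the graph of a partial operator -/
def InGraph (A : H →ₗ.[ℂ] H) (x y : H) : Prop := ∃ hx : x ∈ A.domain, A ⟨x, hx⟩ = y

variable {A : H →ₗ.[ℂ] H}

lemma inGraph_apply (x : A.domain) : InGraph A x (A x) := ⟨x.2, by congr⟩

lemma InGraph.add {a b p q : H} (h1 : InGraph A a p) (h2 : InGraph A b q) :
    InGraph A (a + b) (p + q) := by
  obtain ⟨ha, rfl⟩ := h1
  obtain ⟨hb, rfl⟩ := h2
  refine ⟨A.domain.add_mem ha hb, ?_⟩
  rw [show (⟨a + b, _⟩ : A.domain) = ⟨a, ha⟩ + ⟨b, hb⟩ from rfl, A.map_add]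

lemma InGraph.smul {a p : H} (c : ℂ) (h1 : InGraph A a p) :
    InGraph A (c • a) (c • p) := by
  obtain ⟨ha, rfl⟩ := h1
  refine ⟨A.domain.smul_mem c ha, ?_⟩
  rw [show (⟨c • a, _⟩ : A.domain) = c • ⟨a, ha⟩ from rfl, A.map_smul]

lemma InGraph.transfer {S T : H →ₗ.[ℂ] H} (h : S = T) {x y : H}
    (hxy : InGraph S x y) : InGraph T x y := h ▸ hxy

lemma symm_graph (hA : IsSelfAdjoint A) {a p b q : H}
    (h1 : InGraph A a p) (h2 : InGraph A b q) : ⟪p, b⟫ = ⟪a, q⟫ := by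
  have hd : Dense (A.domain : Set H) := hA.dense_domain
  have F := LinearPMap.adjoint_isFormalAdjoint hd
  have hAe : A.adjoint = A := hA
  obtain ⟨ha', hp⟩ := h1.transfer hAe.symm
  obtain ⟨hb, hq⟩ := h2
  have := F ⟨a, ha'⟩ ⟨b, hb⟩
  rw [hp, hq] at this
  exact this

lemma crit_graph (hA : IsSelfAdjoint A) {x w : H}
    (h : ∀ u v : H, InGraph A u v → ⟪x, v⟫ = ⟪w, u⟫) : InGraph A x w := by
  have hd : Dense (A.domain : Set H) := hA.dense_domain
  have h' : ∀ u : A.domain, ⟪w, (u : H)⟫ = ⟪x, A u⟫ :=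
    fun u => (h u (A u) (inGraph_apply u)).symm
  have hx : x ∈ A.adjoint.domain :=
    A.mem_adjoint_domain_of_exists x ⟨w, h'⟩
  have hval : A.adjoint ⟨x, hx⟩ = w := LinearPMap.adjoint_apply_eq hd ⟨x, hx⟩ h'
  have hAe : A.adjoint = A := hA
  exact InGraph.transfer hAe ⟨hx, hval⟩


lemma cauchy_of_dominated {f : ℕ → H} {u : ℕ → H} (hf : CauchySeq f)
    (h : ∀ k l, ‖u k - u l‖ ≤ ‖f k - f l‖) : CauchySeq u := by
  rw [Metric.cauchySeq_iff] at hf ⊢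
  intro ε hε
  obtain ⟨N, hN⟩ := hf ε hε
  refine ⟨N, fun m hm k hk => lt_of_le_of_lt ?_ (hN m hm k hk)⟩
  rw [dist_eq_norm, dist_eq_norm]
  exact h m k

lemma closed_graph (hA : IsSelfAdjoint A) {x y : H} (u v : ℕ → H)
    (hG : ∀ k, InGraph A (u k) (v k))
    (hu : Filter.Tendsto u Filter.atTop (nhds x))
    (hv : Filter.Tendsto v Filter.atTop (nhds y)) : InGraph A x y := by
  apply crit_graph hA
  intro a b hab
  have h1 : Filter.Tendsto (fun k => ⟪v k, a⟫) Filter.atTop (nhds ⟪y, a⟫) :=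
    hv.inner tendsto_const_nhds
  have h2 : Filter.Tendsto (fun k => ⟪u k, b⟫) Filter.atTop (nhds ⟪x, b⟫) :=
    hu.inner tendsto_const_nhds
  have heq : (fun k => ⟪v k, a⟫) = fun k => ⟪u k, b⟫ :=
    funext fun k => symm_graph hA (hG k) hab
  rw [heq] at h1
  exact tendsto_nhds_unique h2 h1

lemma resolvent (hA : IsSelfAdjoint A) (n : ℕ) :
    ∃ S : H →L[ℂ] H,
      (∀ z : H, InGraph A (S z) ((-Complex.I) • (z - ((n : ℂ) + 1) • S z))) ∧
      (∀ z : H, ‖S z‖ ≤ ‖z‖ / ((n : ℝ) + 1)) ∧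
      (∀ x y : H, InGraph A x y → S (((n : ℂ) + 1) • x + Complex.I • y) = x) := by
  have hcν : (starRingEnd ℂ) ((n : ℂ) + 1) = (n : ℂ) + 1 := by simp
  have hν0 : ((n : ℂ) + 1) ≠ 0 := by
    intro h
    exact Nat.succ_ne_zero n (by exact_mod_cast h)
  set Tlin : A.domain →ₗ[ℂ] H := ((n : ℂ) + 1) • (A.domain.subtype) + Complex.I • A.toFun with hTlin
  have hTapp : ∀ x : A.domain, Tlin x = ((n : ℂ) + 1) • (x : H) + Complex.I • A x := fun x => rfl
  have hsym : ∀ x : A.domain, ⟪(A x : H), (x : H)⟫ = ⟪(x : H), (A x : H)⟫ := fun x =>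
    symm_graph hA (inGraph_apply x) (inGraph_apply x)
  have hreal : ∀ x : A.domain,
      ‖Tlin x‖ ^ 2 = (((n : ℝ) + 1) * ‖(x : H)‖) ^ 2 + ‖A x‖ ^ 2 := by
    intro x
    have hinner : (⟪Tlin x, Tlin x⟫ : ℂ)
        = (((n : ℂ) + 1) * ((n : ℂ) + 1)) * ⟪(x : H), (x : H)⟫ + ⟪(A x : H), (A x : H)⟫ := by
      rw [hTapp]
      simp only [inner_add_left, inner_add_right, inner_smul_left, inner_smul_right,
        Complex.conj_I, hcν]
      linear_combination (-(((n : ℂ) + 1) * Complex.I)) * (hsym x) - (inner ℂ (A x : H) (A x : H) : ℂ) * Complex.I_sq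
    rw [inner_self_eq_norm_sq_to_K, inner_self_eq_norm_sq_to_K,
      inner_self_eq_norm_sq_to_K] at hinner
    have h2 : ((‖Tlin x‖ ^ 2 : ℝ) : ℂ)
        = ((((n : ℝ) + 1) * ((n : ℝ) + 1) * ‖(x : H)‖ ^ 2 + ‖(A x : H)‖ ^ 2 : ℝ) : ℂ) := by
      push_cast
      exact hinner
    have hR := Complex.ofReal_inj.mp h2
    linear_combination hR
  have hb1 : ∀ x : A.domain, ((n : ℝ) + 1) * ‖(x : H)‖ ≤ ‖Tlin x‖ := by
    intro x
    nlinarith [hreal x, norm_nonneg (Tlin x), norm_nonneg (A x), norm_nonneg (x : H),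
      mul_nonneg (by positivity : (0:ℝ) ≤ (n : ℝ) + 1) (norm_nonneg (x : H))]
  have hb2 : ∀ x : A.domain, ‖A x‖ ≤ ‖Tlin x‖ := by
    intro x
    nlinarith [hreal x, norm_nonneg (Tlin x), norm_nonneg (A x),
      mul_nonneg (by positivity : (0:ℝ) ≤ (n : ℝ) + 1) (norm_nonneg (x : H))]
  have inj : Function.Injective Tlin := by
    rw [injective_iff_map_eq_zero]
    intro x hx
    have h := hb1 x
    rw [hx, norm_zero] at h
    have hx0 : ‖(x : H)‖ = 0 := by nlinarith [norm_nonneg (x : H)]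
    exact Subtype.ext (norm_eq_zero.mp hx0)
  have surj : Function.Surjective Tlin := by
    have hseq : IsSeqClosed (LinearMap.range Tlin : Set H) := by
      intro f z hf hfz
      simp only [SetLike.mem_coe, LinearMap.mem_range] at hf
      choose xs hxs using hf
      have hcf : CauchySeq f := hfz.cauchySeq
      have hd1 : ∀ k l, ‖((xs k : H)) - ((xs l : H))‖ ≤ ‖f k - f l‖ := by
        intro k l
        have h1 := hb1 (xs k - xs l)
        rw [map_sub, hxs, hxs] at h1
        have hcoe : ((xs k - xs l : A.domain) : H) = (xs k : H) - (xs l : H) := rfl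
        rw [hcoe] at h1
        nlinarith [norm_nonneg ((xs k : H) - (xs l : H)),
          (by positivity : (0:ℝ) ≤ (n : ℝ))]
      have hd2 : ∀ k l, ‖(A (xs k) : H) - (A (xs l) : H)‖ ≤ ‖f k - f l‖ := by
        intro k l
        have h2 := hb2 (xs k - xs l)
        rw [map_sub, hxs, hxs] at h2
        rwa [A.map_sub] at h2
      have hcu : CauchySeq (fun k => ((xs k : H))) := cauchy_of_dominated hcf hd1
      have hcv : CauchySeq (fun k => ((A (xs k)) : H)) := cauchy_of_dominated hcf hd2
      obtain ⟨xl, hxl⟩ := cauchySeq_tendsto_of_complete hcu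
      obtain ⟨yl, hyl⟩ := cauchySeq_tendsto_of_complete hcv
      have hG : InGraph A xl yl :=
        closed_graph hA _ _ (fun k => inGraph_apply (xs k)) hxl hyl
      have hf' : ∀ k, ((n : ℂ) + 1) • ((xs k : H)) + Complex.I • ((A (xs k)) : H) = f k := by
        intro k; rw [← hxs k, hTapp]
      have hlim : Filter.Tendsto f Filter.atTop
          (nhds (((n : ℂ) + 1) • xl + Complex.I • yl)) :=
        Filter.Tendsto.congr hf' ((hxl.const_smul _).add (hyl.const_smul _))
      have hz := tendsto_nhds_unique hfz hlim
      obtain ⟨hm, hval⟩ := hG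
      refine ⟨⟨xl, hm⟩, ?_⟩
      rw [hTapp, hval, hz]
    have hcl : IsClosed (LinearMap.range Tlin : Set H) := hseq.isClosed
    haveI : CompleteSpace (LinearMap.range Tlin) := hcl.completeSpace_coe
    have horth : (LinearMap.range Tlin)ᗮ = ⊥ := by
      rw [Submodule.eq_bot_iff]
      intro z hz
      have hzort : ∀ x : A.domain, ⟪z, Tlin x⟫ = 0 := by
        intro x
        have h := (Submodule.mem_orthogonal _ z).mp hz (Tlin x) (LinearMap.mem_range_self _ x)
        rw [← inner_conj_symm, h, map_zero]
      have hkey : ∀ u v : H, InGraph A u v →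
          ⟪z, v⟫ = ⟪(-(((n : ℂ) + 1) * Complex.I)) • z, u⟫ := by
        rintro u v ⟨hu, hv⟩
        have h0 := hzort ⟨u, hu⟩
        rw [hTapp, hv] at h0
        simp only [inner_add_right, inner_smul_right] at h0
        rw [inner_smul_left]
        simp only [map_neg, map_mul, Complex.conj_I, hcν]
        linear_combination (-Complex.I) * h0 + (inner ℂ z v : ℂ) * Complex.I_sq
      have hGz : InGraph A z ((-(((n : ℂ) + 1) * Complex.I)) • z) := crit_graph hA hkey
      have he := symm_graph hA hGz hGz
      rw [inner_smul_left, inner_smul_right] at he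
      have hzz : (inner ℂ z z : ℂ) = 0 := by
        simp only [map_neg, map_mul, Complex.conj_I, hcν] at he
        have h2 : (2 * (((n : ℂ) + 1) * Complex.I)) * (inner ℂ z z : ℂ) = 0 := by
          linear_combination he
        rcases mul_eq_zero.mp h2 with h | h
        · exact absurd h (mul_ne_zero two_ne_zero (mul_ne_zero hν0 Complex.I_ne_zero))
        · exact h
      rwa [inner_self_eq_zero] at hzz
    have htop : LinearMap.range Tlin = ⊤ := Submodule.orthogonal_eq_bot_iff.mp horth
    exact LinearMap.range_eq_top.mp htop
  set e := LinearEquiv.ofBijective Tlin ⟨inj, surj⟩ with he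
  have heapp : ∀ x : A.domain, e x = Tlin x := fun x => rfl
  have hesymm : ∀ z : H, Tlin (e.symm z) = z := by
    intro z
    rw [← heapp]
    exact e.apply_symm_apply z
  have hbound : ∀ z : H, ‖(A.domain.subtype ∘ₗ (e.symm : H →ₗ[ℂ] A.domain)) z‖
      ≤ ((n : ℝ) + 1)⁻¹ * ‖z‖ := by
    intro z
    have h := hb1 (e.symm z)
    rw [hesymm z] at h
    have hpos : (0:ℝ) < (n : ℝ) + 1 := by positivity
    have : ‖((e.symm z : A.domain) : H)‖ ≤ ((n : ℝ) + 1)⁻¹ * ‖z‖ := by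
      rw [le_inv_mul_iff₀ hpos]
      exact h
    exact this
  set S : H →L[ℂ] H :=
    LinearMap.mkContinuous (A.domain.subtype ∘ₗ (e.symm : H →ₗ[ℂ] A.domain))
      ((n : ℝ) + 1)⁻¹ hbound with hS
  have hSapp : ∀ z : H, S z = ((e.symm z : A.domain) : H) := fun z => rfl
  refine ⟨S, ?_, ?_, ?_⟩
  · intro z
    refine ⟨by rw [hSapp]; exact (e.symm z).2, ?_⟩
    have hsub : (⟨S z, by rw [hSapp]; exact (e.symm z).2⟩ : A.domain) = e.symm z :=
      Subtype.ext (hSapp z)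
    rw [hsub]
    have hT := hesymm z
    rw [hTapp] at hT
    have hIA : Complex.I • A (e.symm z) = z - ((n : ℂ) + 1) • ((e.symm z : A.domain) : H) :=
      eq_sub_of_add_eq' hT
    calc A (e.symm z) = (-Complex.I) • (Complex.I • A (e.symm z)) := by
          rw [smul_smul]
          norm_num [Complex.I_mul_I]
      _ = (-Complex.I) • (z - ((n : ℂ) + 1) • S z) := by rw [hIA, hSapp]
  · intro z
    have h := hbound z
    rw [div_eq_inv_mul]
    exact h
  · rintro x y ⟨hx, hy⟩
    have hTx : Tlin ⟨x, hx⟩ = ((n : ℂ) + 1) • x + Complex.I • y := by rw [hTapp, hy]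
    have : e.symm (((n : ℂ) + 1) • x + Complex.I • y) = ⟨x, hx⟩ := by
      rw [LinearEquiv.symm_apply_eq, heapp, hTx]
    rw [hSapp, this]


lemma key_zero (A : H →ₗ.[ℂ] H) (hA : IsSelfAdjoint A)
    (U : H →L[ℂ] H) (hU : U ∈ unitary (H →L[ℂ] H))
    (C : H →L[ℂ] H)
    (hC : ∀ x y : A.domain,
      (inner ℂ (A x) (U (y : H)) : ℂ) - inner ℂ (x : H) (U (A y)) = inner ℂ (x : H) (C (y : H)))
    (μ : ℂ) (φ χ : H) (hφ0 : φ ≠ 0)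
    (hφ : U φ = μ • φ) (hχ : U χ = μ • χ) : (inner ℂ φ (C χ) : ℂ) = 0 := by
  have hU1 : star U * U = 1 := (Unitary.mem_iff.mp hU).1
  have hUnorm : ∀ x : H, ‖U x‖ = ‖x‖ := ContinuousLinearMap.norm_map_of_mem_unitary hU
  have hμ1 : ‖μ‖ = 1 := by
    have h := hUnorm φ
    rw [hφ, norm_smul] at h
    have hφn : ‖φ‖ ≠ 0 := norm_ne_zero_iff.mpr hφ0
    field_simp at h
    exact h
  have hμ0 : μ ≠ 0 := by
    intro h; rw [h, norm_zero] at hμ1; norm_num at hμ1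
  have hUadφ : (star U) φ = (starRingEnd ℂ) μ • φ := by
    have h : μ • ((star U) φ) = φ := by
      have h2 : (star U) (U φ) = φ := by
        rw [← ContinuousLinearMap.mul_apply, hU1, ContinuousLinearMap.one_apply]
      rwa [hφ, map_smul] at h2
    have h4 : μ • ((star U) φ) = μ • (((starRingEnd ℂ) μ) • φ) := by
      rw [h, ← RCLike.inv_eq_conj hμ1, smul_smul, mul_inv_cancel₀ hμ0, one_smul]
    exact smul_right_injective H hμ0 h4
  have hinner_mu : ∀ v : H, (inner ℂ φ (U v) : ℂ) = μ * inner ℂ φ v := by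
    intro v
    rw [← ContinuousLinearMap.adjoint_inner_left, ← ContinuousLinearMap.star_eq_adjoint,
      hUadφ, inner_smul_left]
    simp
  have hCgraph : ∀ a p b q : H, InGraph A a p → InGraph A b q →
      (inner ℂ p (U b) : ℂ) - inner ℂ a (U q) = inner ℂ a (C b) := by
    rintro a p b q ⟨ha, hp⟩ ⟨hb, hq⟩
    have := hC ⟨a, ha⟩ ⟨b, hb⟩
    rwa [hp, hq] at this
  have hUgraph : ∀ b q : H, InGraph A b q → InGraph A (U b) (U q + C b) := by
    intro b q hbq
    apply crit_graph hA
    intro u v huv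
    have h := hCgraph u v b q huv hbq
    have h2 : (inner ℂ v (U b) : ℂ) = inner ℂ u (U q + C b) := by
      rw [inner_add_right]; linear_combination h
    calc (inner ℂ (U b) v : ℂ) = (starRingEnd ℂ) (inner ℂ v (U b) : ℂ) := (inner_conj_symm _ _).symm
      _ = (starRingEnd ℂ) (inner ℂ u (U q + C b) : ℂ) := by rw [h2]
      _ = inner ℂ (U q + C b) u := inner_conj_symm _ _
  choose S h1 h2 h3 using fun n => resolvent hA n
  set R : ℕ → H → H := fun n z => ((n : ℂ) + 1) • S n z with hR
  have hRapp : ∀ (n : ℕ) (z : H), R n z = ((n : ℂ) + 1) • S n z := fun n z => rfl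
  have hnun : ∀ n : ℕ, ‖((n : ℂ) + 1)‖ = (n : ℝ) + 1 := by
    intro n
    rw [show ((n : ℂ) + 1) = ((n + 1 : ℕ) : ℂ) by push_cast; ring, Complex.norm_natCast]
    push_cast
    ring
  have hRbd : ∀ (n : ℕ) (z : H), ‖R n z‖ ≤ ‖z‖ := by
    intro n z
    rw [hRapp, norm_smul, hnun]
    have h := h2 n z
    have hpos : (0:ℝ) < (n : ℝ) + 1 := by positivity
    calc ((n:ℝ) + 1) * ‖S n z‖ ≤ ((n:ℝ) + 1) * (‖z‖ / ((n:ℝ) + 1)) :=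
          mul_le_mul_of_nonneg_left h (le_of_lt hpos)
      _ = ‖z‖ := by field_simp
  have hRsub : ∀ (n : ℕ) (u v : H), R n u - R n v = R n (u - v) := by
    intro n u v
    rw [hRapp, hRapp, hRapp, ← smul_sub, ← map_sub]
  have hconvG : ∀ x y : H, InGraph A x y →
      Filter.Tendsto (fun n => R n x) Filter.atTop (nhds x) := by
    intro x y hxy
    have hexp : ∀ n : ℕ, R n x = x - Complex.I • S n y := by
      intro n
      have h := h3 n x y hxy
      rw [map_add, map_smul, map_smul] at h
      rw [hRapp, eq_sub_of_add_eq h]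
    rw [tendsto_iff_norm_sub_tendsto_zero]
    have hb : ∀ n : ℕ, ‖R n x - x‖ ≤ ‖y‖ / ((n : ℝ) + 1) := by
      intro n
      rw [hexp n]
      have he : x - Complex.I • S n y - x = -(Complex.I • S n y) := by abel
      rw [he, norm_neg, norm_smul, Complex.norm_I, one_mul]
      exact h2 n y
    apply squeeze_zero (fun n => norm_nonneg _) hb
    have ht := (tendsto_const_div_atTop_nhds_zero_nat ‖y‖).comp (Filter.tendsto_add_atTop_nat 1)
    refine ht.congr fun n => ?_
    simp only [Function.comp_apply]
    push_cast
    ring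
  have hconv : ∀ z : H, Filter.Tendsto (fun n => R n z) Filter.atTop (nhds z) := by
    intro z
    rw [Metric.tendsto_atTop]
    intro ε hε
    have hd : Dense (A.domain : Set H) := hA.dense_domain
    obtain ⟨x, hx, hxz⟩ := Metric.mem_closure_iff.mp (hd z) (ε/3) (by positivity)
    have hGx : InGraph A x (A ⟨x, hx⟩) := inGraph_apply ⟨x, hx⟩
    have ht := hconvG x _ hGx
    rw [Metric.tendsto_atTop] at ht
    obtain ⟨N, hN⟩ := ht (ε/3) (by positivity)
    refine ⟨N, fun n hn => ?_⟩
    have hd1 : dist (R n z) (R n x) < ε/3 := by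
      rw [dist_eq_norm, hRsub]
      calc ‖R n (z - x)‖ ≤ ‖z - x‖ := hRbd n _
        _ = dist z x := (dist_eq_norm z x).symm
        _ < ε/3 := hxz
    calc dist (R n z) z ≤ dist (R n z) (R n x) + dist (R n x) x + dist x z :=
          dist_triangle4 _ _ _ _
      _ < ε/3 + ε/3 + ε/3 := by
          have h3' := hN n hn
          have h4 : dist x z < ε/3 := by rw [dist_comm]; exact hxz
          gcongr
      _ = ε := by ring
  have hzero : ∀ n : ℕ, (inner ℂ φ (R n (C (R n χ))) : ℂ) = 0 := by
    intro n
    have hSχ := h1 n χ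
    set s : H := S n χ with hs
    set a : H := (-Complex.I) • (χ - ((n:ℂ)+1) • s) with ha
    have hGw : InGraph A (((n:ℂ)+1) • s) (((n:ℂ)+1) • a) := hSχ.smul _
    have hGUw := hUgraph _ _ hGw
    have huniq := h3 n _ _ hGUw
    have hIa : Complex.I • a = χ - ((n:ℂ)+1) • s := by
      rw [ha, smul_smul]
      norm_num [Complex.I_mul_I]
    have harg : ((n:ℂ)+1) • (U (((n:ℂ)+1) • s))
        + Complex.I • (U (((n:ℂ)+1) • a) + C (((n:ℂ)+1) • s))
        = (((n:ℂ)+1) * μ) • χ + Complex.I • C (((n:ℂ)+1) • s) := by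
      have hU2 : ((n:ℂ)+1) • (((n:ℂ)+1) • s) + Complex.I • (((n:ℂ)+1) • a)
          = ((n:ℂ)+1) • χ := by
        rw [smul_comm Complex.I ((n:ℂ)+1) a, ← smul_add, hIa]
        congr 1
        abel
      have hlin : ((n:ℂ)+1) • (U (((n:ℂ)+1) • s)) + Complex.I • (U (((n:ℂ)+1) • a))
          = U (((n:ℂ)+1) • (((n:ℂ)+1) • s) + Complex.I • (((n:ℂ)+1) • a)) := by
        simp only [map_add, map_smul]
      rw [smul_add, ← add_assoc, hlin, hU2, map_smul, hχ, smul_smul]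
    rw [harg] at huniq
    rw [map_add, map_smul, map_smul] at huniq
    have hRχ : R n χ = ((n:ℂ)+1) • s := hRapp n χ
    have hUR : U (R n χ) = μ • R n χ + Complex.I • S n (C (R n χ)) := by
      rw [hRχ, ← huniq, ← hs, smul_smul, mul_comm μ ((n:ℂ)+1)]
    have hip := hinner_mu (R n χ)
    rw [hUR, inner_add_right] at hip
    simp only [inner_smul_right] at hip
    have hz : (inner ℂ φ (S n (C (R n χ))) : ℂ) = 0 := by
      have h0 : Complex.I * (inner ℂ φ (S n (C (R n χ))) : ℂ) = 0 := by
        linear_combination hip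
      exact (mul_eq_zero.mp h0).resolve_left Complex.I_ne_zero
    rw [hRapp n (C (R n χ)), inner_smul_right, hz, mul_zero]
  have hlim : Filter.Tendsto (fun n => R n (C (R n χ))) Filter.atTop (nhds (C χ)) := by
    rw [tendsto_iff_norm_sub_tendsto_zero]
    have hb : ∀ n : ℕ, ‖R n (C (R n χ)) - C χ‖
        ≤ ‖C‖ * ‖R n χ - χ‖ + ‖R n (C χ) - C χ‖ := by
      intro n
      have htri := dist_triangle (R n (C (R n χ))) (R n (C χ)) (C χ)
      rw [dist_eq_norm, dist_eq_norm, dist_eq_norm] at htri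
      refine le_trans htri ?_
      gcongr
      rw [hRsub]
      refine le_trans (hRbd _ _) ?_
      rw [← map_sub]
      exact C.le_opNorm _
    apply squeeze_zero (fun n => norm_nonneg _) hb
    have t1 : Filter.Tendsto (fun n => ‖R n χ - χ‖) Filter.atTop (nhds 0) := by
      have := ((hconv χ).sub_const χ).norm
      simpa using this
    have t2 : Filter.Tendsto (fun n => ‖R n (C χ) - C χ‖) Filter.atTop (nhds 0) := by
      have := ((hconv (C χ)).sub_const (C χ)).norm
      simpa using this
    have := (t1.const_mul ‖C‖).add t2
    simpa using this
  have hfin : Filter.Tendsto (fun n => (inner ℂ φ (R n (C (R n χ))) : ℂ)) Filter.atTop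
      (nhds (inner ℂ φ (C χ))) := tendsto_const_nhds.inner hlim
  have hfin0 : Filter.Tendsto (fun n => (inner ℂ φ (R n (C (R n χ))) : ℂ)) Filter.atTop
      (nhds 0) := by
    rw [show (fun n => (inner ℂ φ (R n (C (R n χ))) : ℂ)) = fun _ => 0 from funext hzero]
    exact tendsto_const_nhds
  exact tendsto_nhds_unique hfin hfin0

end Virial

/-- `C` is the bounded operator representing the commutator form
`F(φ,ψ) = ⟨Aφ, Bψ⟩ − ⟨φ, BAψ⟩` on `D(A) × D(A)`; its existence means `B ∈ C¹(A)`
and then `C = ad_A(B) = [A,B]`. -/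
def IsCommutatorOf (A : H →ₗ.[ℂ] H) (B C : H →L[ℂ] H) : Prop :=
  ∀ x y : A.domain,
    (inner ℂ (A x) (B (y : H)) : ℂ) - inner ℂ (x : H) (B (A y)) = inner ℂ (x : H) (C (y : H))

/-- Virial theorem (eigenvector form): if `U` is unitary, `U ∈ C¹(A)` with
`ad_A U = C`, so that `U*AU − A = U* ∘ C`, and `φ, ψ` are eigenvectors of `U` for the same
eigenvalue `μ`, then `⟨φ, (U*AU − A)ψ⟩ = 0`; in particular `⟨φ, (U*AU − A)φ⟩ = 0`. -/
theorem stmt_1 (A : H →ₗ.[ℂ] H) (hA : IsSelfAdjoint A)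
    (U : H →L[ℂ] H) (hU : U ∈ unitary (H →L[ℂ] H))
    (C : H →L[ℂ] H) (hC : IsCommutatorOf A U C)
    (μ : ℂ) (φ ψ : H) (hφ0 : φ ≠ 0) (hψ0 : ψ ≠ 0)
    (hφ : U φ = μ • φ) (hψ : U ψ = μ • ψ) :
    (inner ℂ φ ((star U * C) ψ) : ℂ) = 0 ∧ (inner ℂ φ ((star U * C) φ) : ℂ) = 0 := by
  have key : ∀ χ : H, U χ = μ • χ → (inner ℂ φ ((star U * C) χ) : ℂ) = 0 := by
    intro χ hχ
    have h0 : (inner ℂ φ (C χ) : ℂ) = 0 :=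
      Virial.key_zero A hA U hU C (fun x y => hC x y) μ φ χ hφ0 hφ hχ
    rw [ContinuousLinearMap.mul_apply, ContinuousLinearMap.star_eq_adjoint,
      ContinuousLinearMap.adjoint_inner_right, hφ, inner_smul_left, h0, mul_zero]
  exact ⟨key ψ hψ, key φ hφ⟩
end

section
/- Let U be a unitary operator on a complex Hilbert space H which is of class C^1(A) for a self-adjoint operator A with dense domain D(A). Assume U is weakly propagating with respect to A, i.e. the bounded operator U*AU − A is non-negative and injective. Then U has no eigenvalues (its pure point spectrum is empty). -/
open scoped InnerProductSpace ComplexConjugate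
open Complex Filter

set_option linter.unusedSectionVars false
set_option linter.unusedVariables false
set_option maxHeartbeats 1000000

variable {H : Type} [NormedAddCommGroup H] [InnerProductSpace ℂ H] [CompleteSpace H]

lemma stmt2_pmap_congr {f g : H →ₗ.[ℂ] H} (h : f = g) {x : H} (hx : x ∈ f.domain) :
    ∃ hx' : x ∈ g.domain, f ⟨x, hx⟩ = g ⟨x, hx'⟩ := by subst h; exact ⟨hx, rfl⟩

lemma stmt2_pmap_symm (A : H →ₗ.[ℂ] H) (hA : IsSelfAdjoint A) (x y : A.domain) :
    ⟪(A x : H), (y : H)⟫_ℂ = ⟪(x : H), (A y : H)⟫_ℂ := by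
  have hd := hA.dense_domain
  have h := LinearPMap.adjoint_isFormalAdjoint (T := A) hd
  have he : A.adjoint = A := hA
  have hx' : (x : H) ∈ A.adjoint.domain := by rw [he]; exact x.2
  have h2 := h ⟨(x : H), hx'⟩ y
  obtain ⟨hx2, h3⟩ := stmt2_pmap_congr he hx'
  rw [h3] at h2
  exact h2

lemma stmt2_pmap_mem_crit (A : H →ₗ.[ℂ] H) (hA : IsSelfAdjoint A) {x v : H}
    (h : ∀ u : A.domain, ⟪v, (u : H)⟫_ℂ = ⟪x, (A u : H)⟫_ℂ) :
    ∃ hx : x ∈ A.domain, A ⟨x, hx⟩ = v := by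
  have hd := hA.dense_domain
  have he : A.adjoint = A := hA
  have hx' : x ∈ A.adjoint.domain :=
    LinearPMap.mem_adjoint_domain_of_exists (T := A) x ⟨v, h⟩
  have happ : A.adjoint ⟨x, hx'⟩ = v := LinearPMap.adjoint_apply_eq hd ⟨x, hx'⟩ h
  obtain ⟨hx2, h3⟩ := stmt2_pmap_congr he hx'
  exact ⟨hx2, by rw [← h3]; exact happ⟩

lemma stmt2_pmap_norm_sq (A : H →ₗ.[ℂ] H) (hA : IsSelfAdjoint A) (t : ℝ) (x : A.domain) :
    ‖(A x : H) + ((t : ℂ) * I) • (x : H)‖ ^ 2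
      = ‖(A x : H)‖ ^ 2 + t ^ 2 * ‖(x : H)‖ ^ 2 := by
  rw [@norm_add_sq ℂ]
  have h0 : ⟪(A x : H), (x : H)⟫_ℂ = ⟪(x : H), (A x : H)⟫_ℂ := stmt2_pmap_symm A hA x x
  have h1 : conj ⟪(A x : H), (x : H)⟫_ℂ = ⟪(A x : H), (x : H)⟫_ℂ := by
    rw [inner_conj_symm]; exact h0.symm
  have him : (⟪(A x : H), (x : H)⟫_ℂ).im = 0 := Complex.conj_eq_iff_im.mp h1
  have hre : RCLike.re ⟪(A x : H), ((t : ℂ) * I) • (x : H)⟫_ℂ = 0 := by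
    rw [inner_smul_right]
    simp [Complex.mul_re, Complex.mul_im, him]
  rw [hre, norm_smul]
  simp [norm_mul, mul_pow, sq_abs]

lemma stmt2_pmap_est (A : H →ₗ.[ℂ] H) (hA : IsSelfAdjoint A) (t : ℝ) (x : A.domain) (y : H)
    (h : (A x : H) + ((t : ℂ) * I) • (x : H) = y) :
    ‖(A x : H)‖ ≤ ‖y‖ ∧ |t| * ‖(x : H)‖ ≤ ‖y‖ := by
  have hsq := stmt2_pmap_norm_sq A hA t x
  rw [h] at hsq
  constructor
  · nlinarith [norm_nonneg (A x : H), norm_nonneg y, norm_nonneg (x : H), sq_nonneg t]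
  · nlinarith [norm_nonneg (A x : H), norm_nonneg y, norm_nonneg (x : H),
      abs_nonneg t, _root_.sq_abs t, mul_nonneg (abs_nonneg t) (norm_nonneg (x : H))]

section
variable (A : H →ₗ.[ℂ] H) (hA : IsSelfAdjoint A)

include hA in
lemma stmt2_pmap_surj (t : ℝ) (ht : t ≠ 0) (y : H) :
    ∃ x : A.domain, (A x : H) + ((t : ℂ) * I) • (x : H) = y := by
  classical
  set s : ℂ := (t : ℂ) * I with hs
  -- the operator L
  let L : A.domain →ₗ[ℂ] H := A.toFun + s • A.domain.subtype
  have hL : ∀ x : A.domain, L x = (A x : H) + s • (x : H) := fun x => rfl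
  set M : Submodule ℂ H := LinearMap.range L with hM
  -- M is closed
  have hclosed : IsClosed (M : Set H) := by
    apply IsSeqClosed.isClosed
    intro m y hmem hlim
    choose u hu using hmem
    have hcau := hlim.cauchySeq
    rw [Metric.cauchySeq_iff] at hcau
    -- (u k : H) is Cauchy
    have key : ∀ k l, dist ((u k : H)) ((u l : H)) ≤ |t|⁻¹ * dist (m k) (m l) ∧
        dist (A (u k) : H) (A (u l) : H) ≤ dist (m k) (m l) := by
      intro k l
      have hdiff : (A (u k - u l) : H) + s • ((u k - u l : A.domain) : H) = m k - m l := by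
        rw [← hu k, ← hu l]
        push_cast [LinearPMap.map_sub]
        rw [hL, hL]
        module
      have := stmt2_pmap_est A hA t (u k - u l) _ hdiff
      simp only [dist_eq_norm]
      constructor
      · rw [← mul_le_mul_iff_right₀ (abs_pos.mpr ht), ← mul_assoc, mul_inv_cancel₀ (abs_ne_zero.mpr ht), one_mul]
        calc |t| * ‖(u k : H) - (u l : H)‖ = |t| * ‖((u k - u l : A.domain) : H)‖ := by push_cast; ring_nf
          _ ≤ ‖m k - m l‖ := this.2
      · calc ‖(A (u k) : H) - (A (u l) : H)‖ = ‖(A (u k - u l) : H)‖ := by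
              rw [LinearPMap.map_sub]
          _ ≤ ‖m k - m l‖ := this.1
    have hcau1 : CauchySeq (fun k => (u k : H)) := by
      rw [Metric.cauchySeq_iff]
      intro ε hε
      obtain ⟨N, hN⟩ := hcau (|t| * ε) (by positivity)
      exact ⟨N, fun k hk l hl => lt_of_le_of_lt ((key k l).1) (by
        rw [inv_mul_lt_iff₀ (abs_pos.mpr ht)]
        exact hN k hk l hl)⟩
    have hcau2 : CauchySeq (fun k => (A (u k) : H)) := by
      rw [Metric.cauchySeq_iff]
      intro ε hε
      obtain ⟨N, hN⟩ := hcau ε hε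
      exact ⟨N, fun k hk l hl => lt_of_le_of_lt ((key k l).2) (hN k hk l hl)⟩
    obtain ⟨x, hx⟩ := cauchySeq_tendsto_of_complete hcau1
    obtain ⟨v, hv⟩ := cauchySeq_tendsto_of_complete hcau2
    -- identify limit
    have hcrit : ∀ w : A.domain, ⟪v, (w : H)⟫_ℂ = ⟪x, (A w : H)⟫_ℂ := by
      intro w
      have l1 : Filter.Tendsto (fun k => ⟪(A (u k) : H), (w : H)⟫_ℂ) Filter.atTop
          (nhds ⟪v, (w : H)⟫_ℂ) := hv.inner tendsto_const_nhds
      have l2 : Filter.Tendsto (fun k => ⟪(u k : H), (A w : H)⟫_ℂ) Filter.atTop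
          (nhds ⟪x, (A w : H)⟫_ℂ) := hx.inner tendsto_const_nhds
      have heq : (fun k => ⟪(A (u k) : H), (w : H)⟫_ℂ) = fun k => ⟪(u k : H), (A w : H)⟫_ℂ := by
        funext k; exact stmt2_pmap_symm A hA (u k) w
      rw [heq] at l1
      exact tendsto_nhds_unique l1 l2
    obtain ⟨hxmem, hxapp⟩ := stmt2_pmap_mem_crit A hA hcrit
    refine ⟨⟨x, hxmem⟩, ?_⟩
    rw [hL]
    have : Filter.Tendsto (fun k => (A (u k) : H) + s • (u k : H)) Filter.atTop (nhds (v + s • x)) :=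
      hv.add (hx.const_smul s)
    have h2 : (fun k => (A (u k) : H) + s • (u k : H)) = m := by
      funext k; rw [← hu k, hL]
    rw [h2] at this
    have : v + s • x = y := tendsto_nhds_unique this hlim
    rw [hxapp]; exact this
  -- M has trivial orthogonal complement
  have horth : Mᗮ = ⊥ := by
    rw [Submodule.eq_bot_iff]
    intro z hz
    have hz' : ∀ x : A.domain, ⟪z, (A x : H) + s • (x : H)⟫_ℂ = 0 := by
      intro x
      have := (Submodule.mem_orthogonal M z).mp hz (L x) (LinearMap.mem_range_self L x)
      rw [← inner_conj_symm, hL] at this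
      simpa [inner_add_right, inner_smul_right] using congrArg conj this
    have hcrit : ∀ u : A.domain, ⟪s • z, (u : H)⟫_ℂ = ⟪z, (A u : H)⟫_ℂ := by
      intro u
      have h1 := hz' u
      rw [inner_add_right, inner_smul_right] at h1
      rw [inner_smul_left]
      have hconj : conj s = -s := by simp [hs]
      rw [hconj]
      linear_combination -h1
    obtain ⟨hzmem, hzapp⟩ := stmt2_pmap_mem_crit A hA hcrit
    -- A z = s • z with A symmetric forces z = 0
    have hsym := stmt2_pmap_symm A hA ⟨z, hzmem⟩ ⟨z, hzmem⟩
    rw [hzapp] at hsym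
    rw [inner_smul_left, inner_smul_right] at hsym
    have hker : (conj s - s) * ⟪z, z⟫_ℂ = 0 := by linear_combination hsym
    have hcs : conj s - s = -2 * s := by simp [hs]; ring
    rw [hcs] at hker
    have hs0 : s ≠ 0 := by
      simp [hs, Complex.ext_iff, ht]
    have : ⟪z, z⟫_ℂ = 0 := by
      rcases mul_eq_zero.mp hker with h | h
      · exact absurd h (by simp [hs0])
      · exact h
    exact inner_self_eq_zero.mp this
  have hM' : M = ⊤ := by
    have : CompleteSpace M := hclosed.completeSpace_coe
    have hcc : Mᗮᗮ = M := Submodule.orthogonal_orthogonal M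
    rw [horth, Submodule.bot_orthogonal_eq_top] at hcc
    exact hcc.symm
  have hy : y ∈ M := hM' ▸ Submodule.mem_top
  obtain ⟨x, hxy⟩ := hy
  exact ⟨x, by rw [← hL x]; exact hxy⟩

end

section
variable (A : H →ₗ.[ℂ] H) (hA : IsSelfAdjoint A)

include hA in
lemma stmt2_sol_tendsto (t : ℕ → ℝ) (hgrow : ∀ n : ℕ, ((n : ℝ) + 1) ≤ |t n|) (φ : H)
    (x : ℕ → A.domain)
    (hx : ∀ n, (A (x n) : H) + ((t n : ℂ) * I) • (x n : H) = ((t n : ℂ) * I) • φ) :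
    Tendsto (fun n => (x n : H)) atTop (nhds φ) := by
  have htne : ∀ n, t n ≠ 0 := by
    intro n
    have := hgrow n
    intro h; rw [h] at this; simp at this; linarith [this, Nat.cast_nonneg (α := ℝ) n]
  have htpos : ∀ n, (0:ℝ) < |t n| := fun n => lt_of_lt_of_le (by positivity) (hgrow n)
  rw [Metric.tendsto_atTop]
  intro ε hε
  -- pick χ in the domain close to φ
  have hd := hA.dense_domain
  obtain ⟨c, hcd, hcmem⟩ := Metric.dense_iff.mp hd φ (ε/3) (by positivity)
  set χ : A.domain := ⟨c, hcmem⟩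
  -- solutions with data χ
  have hsol : ∀ n, ∃ z : A.domain,
      (A z : H) + ((t n : ℂ) * I) • (z : H) = ((t n : ℂ) * I) • (χ : H) :=
    fun n => stmt2_pmap_surj A hA (t n) (htne n) _
  choose z hz using hsol
  -- estimate 1 : ‖x n - z n‖ ≤ ‖φ - χ‖
  have he1 : ∀ n, ‖(x n : H) - (z n : H)‖ ≤ ‖φ - (χ : H)‖ := by
    intro n
    have hdiff : (A (x n - z n) : H) + ((t n : ℂ) * I) • ((x n - z n : A.domain) : H)
        = ((t n : ℂ) * I) • (φ - (χ : H)) := by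
      push_cast [LinearPMap.map_sub]
      rw [smul_sub, smul_sub]
      rw [← hx n, ← hz n]
      module
    have := (stmt2_pmap_est A hA (t n) _ _ hdiff).2
    rw [norm_smul] at this
    have hn : ‖(t n : ℂ) * I‖ = |t n| := by
      rw [norm_mul, Complex.norm_I, mul_one, Complex.norm_real, Real.norm_eq_abs]
    rw [hn] at this
    have h2 : ((x n - z n : A.domain) : H) = (x n : H) - (z n : H) := by push_cast; ring
    rw [h2] at this
    exact le_of_mul_le_mul_left this (htpos n)
  -- estimate 2 : ‖z n - χ‖ ≤ ‖A χ‖ / (n+1)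
  have he2 : ∀ n, ‖(z n : H) - (χ : H)‖ ≤ ‖(A χ : H)‖ / ((n:ℝ) + 1) := by
    intro n
    have hdiff : (A (z n - χ) : H) + ((t n : ℂ) * I) • ((z n - χ : A.domain) : H)
        = -(A χ : H) := by
      push_cast [LinearPMap.map_sub]
      rw [smul_sub, ← hz n]
      module
    have := (stmt2_pmap_est A hA (t n) _ _ hdiff).2
    have hn : ‖-(A χ : H)‖ = ‖(A χ : H)‖ := norm_neg _
    rw [hn] at this
    have h2 : ((z n - χ : A.domain) : H) = (z n : H) - (χ : H) := by push_cast; ring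
    rw [h2] at this
    rw [le_div_iff₀ (by positivity : (0:ℝ) < ((n:ℝ)+1))]
    calc ‖(z n : H) - (χ : H)‖ * ((n:ℝ)+1) ≤ ‖(z n : H) - (χ : H)‖ * |t n| :=
          mul_le_mul_of_nonneg_left (hgrow n) (norm_nonneg _)
      _ ≤ ‖(A χ : H)‖ := by rw [mul_comm]; exact this
  -- choose N
  obtain ⟨N, hN⟩ := exists_nat_gt (‖(A χ : H)‖ / (ε/3))
  refine ⟨N, fun n hn => ?_⟩
  have hd3 : ‖(A χ : H)‖ / ((n:ℝ) + 1) < ε / 3 := by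
    rw [div_lt_iff₀ (by positivity : (0:ℝ) < ((n:ℝ)+1))]
    have h1 : ‖(A χ : H)‖ / (ε/3) < ((n:ℝ) + 1) := by
      calc ‖(A χ : H)‖ / (ε/3) < (N : ℝ) := hN
        _ ≤ (n : ℝ) := by exact_mod_cast Nat.cast_le.mpr hn
        _ < ((n:ℝ) + 1) := by linarith
    rw [div_lt_iff₀ (by positivity : (0:ℝ) < ε/3)] at h1
    calc ‖(A χ : H)‖ < ((n:ℝ)+1) * (ε/3) := by linarith [h1]
      _ = ε/3 * ((n:ℝ)+1) := by ring
  have hfc : ‖φ - (χ : H)‖ < ε/3 := by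
    rw [← dist_eq_norm, dist_comm]; exact Metric.mem_ball.mp hcd
  calc dist ((x n : H)) φ = ‖(x n : H) - φ‖ := dist_eq_norm _ _
    _ ≤ ‖(x n : H) - (z n : H)‖ + ‖(z n : H) - (χ:H)‖ + ‖(χ:H) - φ‖ := by
        have hsplit : (x n : H) - φ = ((x n : H) - (z n : H)) + ((z n : H) - (χ:H)) + ((χ:H) - φ) := by abel
        rw [hsplit]
        exact le_trans (norm_add_le _ _) (add_le_add_left (norm_add_le _ _) _)
    _ < ε/3 + ε/3 + ε/3 := by
        refine add_lt_add (add_lt_add_of_le_of_lt (lt_of_le_of_lt (he1 n) hfc).le ?_) ?_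
        · exact lt_of_le_of_lt (he2 n) hd3
        · rw [norm_sub_rev]; exact hfc
    _ = ε := by ring

end

-- the tail of the main proof
lemma stmt2_tail (A : H →ₗ.[ℂ] H) (hA : IsSelfAdjoint A)
    (U : H →L[ℂ] H) (C : H →L[ℂ] H) (μ : ℂ) (φ : H)
    (hφ : U φ = μ • φ)
    (hμ : conj μ * μ = 1)
    (hstarU : ∀ z w : H, ⟪z, (star U) w⟫_ℂ = ⟪U z, w⟫_ℂ)
    (hstarU2 : ∀ z w : H, ⟪(star U) z, w⟫_ℂ = ⟪z, U w⟫_ℂ)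
    (hUs : star U φ = conj μ • φ)
    (ψ : ℕ → A.domain) (ξ : ℕ → A.domain) (η : ℕ → A.domain)
    (hψlim : Tendsto (fun n => (ψ n : H)) atTop (nhds φ))
    (hξlim : Tendsto (fun n => (ξ n : H)) atTop (nhds φ))
    (hψbd : ∀ n, ‖(ψ n : H)‖ ≤ ‖φ‖)
    (hCψbd : ∀ n, ‖C (ψ n : H)‖ ≤ ‖C‖ * ‖φ‖)
    (hξA : ∀ n, (A (ξ n) : H)
        = (((-((n : ℝ) + 1) : ℝ) : ℂ) * I) • (φ - (ξ n : H)))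
    (hηcoe : ∀ n, ((η n : A.domain) : H) = conj μ • U (ψ n : H) - (ψ n : H))
    (hηeq : ∀ n, (A (η n) : H) + ((((n : ℝ) + 1 : ℝ) : ℂ) * I) • ((η n : A.domain) : H)
      = conj μ • (C (ψ n : H)))
    (hηbd1 : ∀ n, ‖(A (η n) : H)‖ ≤ ‖C‖ * ‖φ‖)
    (hηbd2 : ∀ n : ℕ, ((n : ℝ) + 1) * ‖(η n : H)‖ ≤ ‖C‖ * ‖φ‖) :
    ⟪φ, (star U * C) φ⟫_ℂ = 0 := by
  -- f n = ⟪φ, A η n⟫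
  have hfeq : ∀ n, ⟪φ, (star U * C) (ψ n : H)⟫_ℂ = ⟪φ, (A (η n) : H)⟫_ℂ := by
    intro n
    have h1 : ⟪φ, (star U * C) (ψ n : H)⟫_ℂ = conj μ * ⟪φ, C (ψ n : H)⟫_ℂ := by
      rw [ContinuousLinearMap.mul_apply, hstarU, hφ, inner_smul_left]
    have h2 : ⟪φ, ((η n : A.domain) : H)⟫_ℂ = 0 := by
      rw [hηcoe, inner_sub_right, inner_smul_right]
      have h3 : ⟪φ, U (ψ n : H)⟫_ℂ = μ * ⟪φ, (ψ n : H)⟫_ℂ := by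
        rw [← hstarU2, hUs, inner_smul_left]
        simp
      rw [h3]
      linear_combination (⟪φ, ((ψ n : A.domain) : H)⟫_ℂ) * hμ
    have h4 : (A (η n) : H)
        = conj μ • (C (ψ n : H)) - ((((n : ℝ) + 1 : ℝ) : ℂ) * I) • ((η n : A.domain) : H) := by
      linear_combination (norm := module) hηeq n
    rw [h4, inner_sub_right, inner_smul_right, inner_smul_right, h2, h1]
    ring
  -- bound
  have hfbd : ∀ n, ‖⟪φ, (A (η n) : H)⟫_ℂ‖ ≤ 2 * (‖C‖ * ‖φ‖) * ‖φ - (ξ n : H)‖ := by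
    intro n
    have hsplit : ⟪φ, (A (η n) : H)⟫_ℂ
        = ⟪φ - (ξ n : H), (A (η n) : H)⟫_ℂ + ⟪((ξ n : A.domain) : H), (A (η n) : H)⟫_ℂ := by
      rw [inner_sub_left]; ring
    have hsym : ⟪((ξ n : A.domain) : H), (A (η n) : H)⟫_ℂ
        = ⟪(A (ξ n) : H), ((η n : A.domain) : H)⟫_ℂ := (stmt2_pmap_symm A hA (ξ n) (η n)).symm
    have hb1 : ‖⟪φ - (ξ n : H), (A (η n) : H)⟫_ℂ‖ ≤ ‖φ - (ξ n : H)‖ * (‖C‖ * ‖φ‖) :=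
      le_trans (norm_inner_le_norm _ _) (mul_le_mul_of_nonneg_left (hηbd1 n) (norm_nonneg _))
    have hb2 : ‖⟪(A (ξ n) : H), ((η n : A.domain) : H)⟫_ℂ‖ ≤ ‖φ - (ξ n : H)‖ * (‖C‖ * ‖φ‖) := by
      rw [hξA n, inner_smul_left]
      rw [norm_mul]
      have hssize : ‖conj ((((-((n : ℝ) + 1) : ℝ)) : ℂ) * I)‖ = (n : ℝ) + 1 := by
        rw [RCLike.norm_conj, norm_mul, Complex.norm_I, mul_one, Complex.norm_real,
          Real.norm_eq_abs, abs_neg, abs_of_pos (by positivity)]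
      rw [hssize]
      calc ((n : ℝ) + 1) * ‖⟪φ - (ξ n : H), ((η n : A.domain) : H)⟫_ℂ‖
          ≤ ((n : ℝ) + 1) * (‖φ - (ξ n : H)‖ * ‖(η n : H)‖) := by
            exact mul_le_mul_of_nonneg_left (norm_inner_le_norm _ _) (by positivity)
        _ = ‖φ - (ξ n : H)‖ * (((n : ℝ) + 1) * ‖(η n : H)‖) := by ring
        _ ≤ ‖φ - (ξ n : H)‖ * (‖C‖ * ‖φ‖) :=
            mul_le_mul_of_nonneg_left (hηbd2 n) (norm_nonneg _)
    calc ‖⟪φ, (A (η n) : H)⟫_ℂ‖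
        ≤ ‖⟪φ - (ξ n : H), (A (η n) : H)⟫_ℂ‖ + ‖⟪((ξ n : A.domain) : H), (A (η n) : H)⟫_ℂ‖ := by
          rw [hsplit]; exact norm_add_le _ _
      _ ≤ ‖φ - (ξ n : H)‖ * (‖C‖ * ‖φ‖) + ‖φ - (ξ n : H)‖ * (‖C‖ * ‖φ‖) := by
          refine add_le_add hb1 ?_
          rw [hsym]; exact hb2
      _ = 2 * (‖C‖ * ‖φ‖) * ‖φ - (ξ n : H)‖ := by ring
  -- limits
  have hTf : Tendsto (fun n => ⟪φ, (star U * C) (ψ n : H)⟫_ℂ) atTop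
      (nhds ⟪φ, (star U * C) φ⟫_ℂ) :=
    tendsto_const_nhds.inner (((star U * C).continuous.tendsto φ).comp hψlim)
  have hξ0 : Tendsto (fun n => ‖φ - (ξ n : H)‖) atTop (nhds 0) := by
    have h5 : Tendsto (fun n => φ - (ξ n : H)) atTop (nhds (φ - φ)) :=
      tendsto_const_nhds.sub hξlim
    rw [sub_self] at h5
    simpa using h5.norm
  have hsq : Tendsto (fun n => ‖⟪φ, (star U * C) (ψ n : H)⟫_ℂ‖) atTop (nhds 0) := by
    apply squeeze_zero (fun n => norm_nonneg _)
      (g := fun n => 2 * (‖C‖ * ‖φ‖) * ‖φ - (ξ n : H)‖)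
      (fun n => by rw [hfeq n]; exact hfbd n)
    have := hξ0.const_mul (2 * (‖C‖ * ‖φ‖))
    simpa using this
  have hval := tendsto_nhds_unique hTf.norm hsq
  exact norm_eq_zero.mp hval

lemma stmt2_final (T : H →L[ℂ] H) (hpos : T.IsPositive) (hinj : Function.Injective T)
    (φ : H) (hzero : ⟪φ, T φ⟫_ℂ = 0) : φ = 0 := by
  obtain ⟨p, hp1, -, hp2⟩ :=
    CFC.exists_sqrt_of_isSelfAdjoint_of_quasispectrumRestricts hpos.isSelfAdjoint hpos.spectrumRestricts
  have hadj : ContinuousLinearMap.adjoint p = p := by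
    rw [← ContinuousLinearMap.star_eq_adjoint]; exact hp1
  have h6 : T φ = p (p φ) := by rw [← hp2, ContinuousLinearMap.mul_apply]
  have hpp : ⟪p φ, p φ⟫_ℂ = 0 := by
    calc ⟪p φ, p φ⟫_ℂ = ⟪ContinuousLinearMap.adjoint p φ, p φ⟫_ℂ := by rw [hadj]
      _ = ⟪φ, p (p φ)⟫_ℂ := ContinuousLinearMap.adjoint_inner_left p (p φ) φ
      _ = ⟪φ, T φ⟫_ℂ := by rw [← h6]
      _ = 0 := hzero
  have hp0 : p φ = 0 := inner_self_eq_zero.mp hpp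
  have hT0 : T φ = 0 := by rw [h6, hp0, map_zero]
  apply hinj
  rw [hT0, map_zero]

/-- If the unitary `U` is of class `C¹(A)` and weakly propagating with respect to `A`,
i.e. `U*AU − A = U* ∘ (ad_A U)` is non-negative and injective, then `U` has no
eigenvalues: its pure point spectrum is empty. -/
theorem stmt_2 (A : H →ₗ.[ℂ] H) (hA : IsSelfAdjoint A)
    (U : H →L[ℂ] H) (hU : U ∈ unitary (H →L[ℂ] H))
    (C : H →L[ℂ] H) (hC : IsCommutatorOf A U C)
    (hpos : (star U * C).IsPositive) (hinj : Function.Injective (star U * C)) :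
    ∀ (μ : ℂ) (φ : H), U φ = μ • φ → φ = 0 := by
  intro μ φ hφ
  by_cases hφ0 : φ = 0
  · exact hφ0
  exfalso
  apply hφ0
  -- basic unitarity facts
  have hUU : star U * U = 1 := (Unitary.mem_iff.mp hU).1
  have hstarU : ∀ z w : H, ⟪z, (star U) w⟫_ℂ = ⟪U z, w⟫_ℂ := by
    intro z w
    rw [ContinuousLinearMap.star_eq_adjoint, ContinuousLinearMap.adjoint_inner_right]
  have hstarU2 : ∀ z w : H, ⟪(star U) z, w⟫_ℂ = ⟪z, U w⟫_ℂ := by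
    intro z w
    rw [ContinuousLinearMap.star_eq_adjoint, ContinuousLinearMap.adjoint_inner_left]
  have hUUφ : star U (U φ) = φ := by
    rw [← ContinuousLinearMap.mul_apply, hUU, ContinuousLinearMap.one_apply]
  have hinner : ⟪U φ, U φ⟫_ℂ = ⟪φ, φ⟫_ℂ := by rw [← hstarU, hUUφ]
  have hμ : conj μ * μ = 1 := by
    rw [hφ, inner_smul_left, inner_smul_right] at hinner
    have hne : ⟪φ, φ⟫_ℂ ≠ 0 := inner_self_ne_zero.mpr hφ0
    have h7 : (conj μ * μ) * ⟪φ, φ⟫_ℂ = 1 * ⟪φ, φ⟫_ℂ := by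
      rw [one_mul]; linear_combination hinner
    exact mul_right_cancel₀ hne h7
  have hnμ : ‖μ‖ = 1 := by
    have h8 : ‖μ‖ * ‖μ‖ = 1 := by
      have := congrArg (‖·‖) hμ
      simpa [norm_mul, RCLike.norm_conj] using this
    nlinarith [norm_nonneg μ]
  have hUs : star U φ = conj μ • φ := by
    have h1 : μ • (star U φ) = φ := by rw [← map_smul, ← hφ, hUUφ]
    calc star U φ = (conj μ * μ) • star U φ := by rw [hμ, one_smul]
      _ = conj μ • (μ • star U φ) := by rw [mul_smul]
      _ = conj μ • φ := by rw [h1]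
  -- U maps the domain of A into itself
  have hUD : ∀ ψ : A.domain, ∃ h : U (ψ : H) ∈ A.domain,
      A ⟨U (ψ : H), h⟩ = U (A ψ) + C (ψ : H) := by
    intro ψ
    apply stmt2_pmap_mem_crit A hA
    intro u
    have h1 := hC u ψ
    have h2 : ⟪(A u : H), U (ψ : H)⟫_ℂ = ⟪(u : H), U (A ψ) + C (ψ : H)⟫_ℂ := by
      rw [inner_add_right]; linear_combination h1
    calc ⟪U (A ψ) + C (ψ : H), (u : H)⟫_ℂ
        = conj ⟪(u : H), U (A ψ) + C (ψ : H)⟫_ℂ := (inner_conj_symm _ _).symm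
      _ = conj ⟪(A u : H), U (ψ : H)⟫_ℂ := by rw [h2]
      _ = ⟪U (ψ : H), (A u : H)⟫_ℂ := inner_conj_symm _ _
  choose hUDmem hUDapp using hUD
  -- the scalar sequences
  set s : ℕ → ℂ := fun n => (((n : ℝ) + 1 : ℝ) : ℂ) * I with hs
  -- sequences ψ and ξ
  have hsψ : ∀ n : ℕ, ∃ x : A.domain,
      (A x : H) + ((((n : ℝ) + 1 : ℝ) : ℂ) * I) • (x : H)
        = ((((n : ℝ) + 1 : ℝ) : ℂ) * I) • φ :=
    fun n => stmt2_pmap_surj A hA ((n : ℝ) + 1) (by positivity) _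
  choose ψ hψ using hsψ
  have hsξ : ∀ n : ℕ, ∃ x : A.domain,
      (A x : H) + (((-((n : ℝ) + 1) : ℝ) : ℂ) * I) • (x : H)
        = (((-((n : ℝ) + 1) : ℝ) : ℂ) * I) • φ :=
    fun n => stmt2_pmap_surj A hA (-((n : ℝ) + 1)) (neg_ne_zero.mpr (by positivity)) _
  choose ξ hξ using hsξ
  have habs : ∀ n : ℕ, ((n : ℝ) + 1) ≤ |(n : ℝ) + 1| := fun n => (abs_of_pos (by positivity)).ge
  have habs' : ∀ n : ℕ, ((n : ℝ) + 1) ≤ |(-((n : ℝ) + 1))| := fun n => by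
    rw [abs_neg]; exact habs n
  have hψlim : Tendsto (fun n => (ψ n : H)) atTop (nhds φ) :=
    stmt2_sol_tendsto A hA (fun n => (n : ℝ) + 1) habs φ ψ hψ
  have hξlim : Tendsto (fun n => (ξ n : H)) atTop (nhds φ) :=
    stmt2_sol_tendsto A hA (fun n => -((n : ℝ) + 1)) habs' φ ξ hξ
  -- bound on ψ
  have hψbd : ∀ n, ‖(ψ n : H)‖ ≤ ‖φ‖ := by
    intro n
    have h1 := (stmt2_pmap_est A hA ((n : ℝ) + 1) (ψ n) _ (hψ n)).2
    rw [norm_smul, norm_mul, Complex.norm_I, mul_one, Complex.norm_real,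
      Real.norm_eq_abs] at h1
    have hpos' : (0:ℝ) < |(n : ℝ) + 1| := lt_of_lt_of_le (by positivity) (habs n)
    exact le_of_mul_le_mul_left h1 hpos'
  have hCψbd : ∀ n, ‖C (ψ n : H)‖ ≤ ‖C‖ * ‖φ‖ := fun n =>
    le_trans (C.le_opNorm _) (mul_le_mul_of_nonneg_left (hψbd n) (norm_nonneg C))
  -- the auxiliary sequence η
  set η : ℕ → A.domain :=
    fun n => (conj μ) • (⟨U (ψ n : H), hUDmem (ψ n)⟩ : A.domain) - ψ n with hηdef
  have hηcoe : ∀ n, ((η n : A.domain) : H) = conj μ • U (ψ n : H) - (ψ n : H) := by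
    intro n; simp [hηdef]
  have hηeq : ∀ n, (A (η n) : H) + ((((n : ℝ) + 1 : ℝ) : ℂ) * I) • ((η n : A.domain) : H)
      = conj μ • (C (ψ n : H)) := by
    intro n
    have hA1 : (A (η n) : H)
        = conj μ • (U (A (ψ n)) + C (ψ n : H)) - (A (ψ n) : H) := by
      rw [hηdef]
      simp only [LinearPMap.map_sub, LinearPMap.map_smul]
      rw [hUDapp]
    have hAψ : (A (ψ n) : H)
        = ((((n : ℝ) + 1 : ℝ) : ℂ) * I) • φ - ((((n : ℝ) + 1 : ℝ) : ℂ) * I) • (ψ n : H) := by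
      have := hψ n; linear_combination (norm := module) this
    have hUAψ : U (A (ψ n))
        = ((((n : ℝ) + 1 : ℝ) : ℂ) * I) • (μ • φ)
          - ((((n : ℝ) + 1 : ℝ) : ℂ) * I) • U (ψ n : H) := by
      rw [hAψ, map_sub, map_smul, map_smul, hφ]
    rw [hA1, hUAψ, hAψ, hηcoe]
    match_scalars
    · push_cast; linear_combination (((n : ℂ) + 1) * I) * hμ
    · push_cast; ring
    · push_cast; ring
    · push_cast; ring
  -- bounds on η
  have hηbd : ∀ n : ℕ, ‖(A (η n) : H)‖ ≤ ‖C‖ * ‖φ‖ ∧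
      ((n : ℝ) + 1) * ‖(η n : H)‖ ≤ ‖C‖ * ‖φ‖ := by
    intro n
    have est := stmt2_pmap_est A hA ((n : ℝ) + 1) (η n) _ (hηeq n)
    have hy : ‖conj μ • C (ψ n : H)‖ = ‖C (ψ n : H)‖ := by
      rw [norm_smul, RCLike.norm_conj, hnμ, one_mul]
    constructor
    · calc ‖(A (η n) : H)‖ ≤ ‖conj μ • C (ψ n : H)‖ := est.1
        _ = ‖C (ψ n : H)‖ := hy
        _ ≤ ‖C‖ * ‖φ‖ := hCψbd n
    · have h9 := est.2
      rw [hy, abs_of_pos (by positivity : (0:ℝ) < (n : ℝ) + 1)] at h9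
      exact le_trans h9 (hCψbd n)
  -- form of A ξ n
  have hξA : ∀ n : ℕ, (A (ξ n) : H)
      = (((-((n : ℝ) + 1) : ℝ) : ℂ) * I) • (φ - (ξ n : H)) := by
    intro n
    have h10 := hξ n
    rw [smul_sub]
    linear_combination (norm := module) h10
  -- the inner product vanishes in the limit
  have hzero : ⟪φ, (star U * C) φ⟫_ℂ = 0 :=
    stmt2_tail A hA U C μ φ hφ hμ hstarU hstarU2 hUs ψ ξ η hψlim hξlim hψbd hCψbd hξA
      hηcoe hηeq (fun n => (hηbd n).1) (fun n => (hηbd n).2)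
  exact stmt2_final (star U * C) hpos hinj φ hzero
end

section
/- Let A be a self-adjoint operator on a complex Hilbert space H with dense domain D(A). If a bounded operator B on H is of class C^1(A), then B maps D(A) into D(A). -/
variable {H : Type} [NormedAddCommGroup H] [InnerProductSpace ℂ H] [CompleteSpace H]

/-- `B` is of class `C^1(A)`. -/
def MemC1 (A : H →ₗ.[ℂ] H) (B : H →L[ℂ] H) : Prop := ∃ C, IsCommutatorOf A B C

/-- If a bounded operator `B` is of class `C¹(A)` for a densely defined self-adjoint
operator `A`, then `B` maps `D(A)` into `D(A)`. -/
theorem stmt_3 (A : H →ₗ.[ℂ] H) (hA : IsSelfAdjoint A)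
    (B : H →L[ℂ] H) (hB : MemC1 A B) :
    ∀ x : H, x ∈ A.domain → B x ∈ A.domain := by
  obtain ⟨C, hC⟩ := hB
  intro x hx
  rw [LinearPMap.isSelfAdjoint_def] at hA
  rw [← hA]
  apply LinearPMap.mem_adjoint_domain_of_exists
  refine ⟨B (A ⟨x, hx⟩) + C x, fun y => ?_⟩
  have h := hC y ⟨x, hx⟩
  have h' : (inner ℂ (A y) (B x) : ℂ) = inner ℂ (y : H) (B (A ⟨x, hx⟩) + C x) := by
    rw [inner_add_right]
    linear_combination h
  calc (inner ℂ (B (A ⟨x, hx⟩) + C x) (y : H) : ℂ)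
      = starRingEnd ℂ (inner ℂ (y : H) (B (A ⟨x, hx⟩) + C x)) := (inner_conj_symm _ _).symm
    _ = starRingEnd ℂ (inner ℂ (A y) (B x)) := by rw [h']
    _ = inner ℂ (B x) (A y) := inner_conj_symm _ _
end

section
/- Let k ∈ ℕ, k ≥ 1, and let U be a unitary operator on H. The following assertions are equivalent: (a) U ∈ C^k(A); (b) U* ∈ C^k(A); (c) U ∈ C^1(A) and the bounded operator U*AU − A = U*(ad_A U) belongs to C^{k−1}(A); (d) U ∈ C^1(A) and the bounded operator A − UAU* = (ad_A U)U* belongs to C^{k−1}(A). -/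
set_option linter.unusedSectionVars false


variable {H : Type} [NormedAddCommGroup H] [InnerProductSpace ℂ H] [CompleteSpace H]

/-- `D` is a chain of iterated commutators for `B` of length `k`. -/
def IsAdChain (A : H →ₗ.[ℂ] H) (B : H →L[ℂ] H) (D : ℕ → H →L[ℂ] H) (k : ℕ) : Prop :=
  D 0 = B ∧ ∀ j < k, IsCommutatorOf A (D j) (D (j + 1))

/-- `B` is of class `C^k(A)`. -/
def MemCk (A : H →ₗ.[ℂ] H) (B : H →L[ℂ] H) (k : ℕ) : Prop := ∃ D, IsAdChain A B D k

section Aux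

variable {A : H →ₗ.[ℂ] H}

/-- Maximality of a self-adjoint operator: if `⟨Ax, y⟩ = ⟨x, z⟩` on the domain,
then `y` belongs to the domain and `Ay = z`. -/
lemma sa_max (hA : IsSelfAdjoint A) {y z : H}
    (h : ∀ x : A.domain, (inner ℂ (A x) y : ℂ) = inner ℂ (x : H) z) :
    ∃ hy : y ∈ A.domain, A ⟨y, hy⟩ = z := by
  have hd := hA.dense_domain
  have hA' : A.adjoint = A := hA
  have key : ∀ x : A.domain, (inner ℂ z (x : H) : ℂ) = inner ℂ y (A x) := by
    intro x
    have := congrArg (starRingEnd ℂ) (h x)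
    simpa [inner_conj_symm] using this.symm
  have hy : y ∈ A.adjoint.domain :=
    LinearPMap.mem_adjoint_domain_of_exists _ ⟨z, key⟩
  have hval : A.adjoint ⟨y, hy⟩ = z :=
    LinearPMap.adjoint_apply_eq hd _ key
  have hg : (y, z) ∈ A.adjoint.graph := by
    have := LinearPMap.mem_graph A.adjoint ⟨y, hy⟩
    rwa [hval] at this
  rw [hA'] at hg
  obtain ⟨u, hu⟩ := (LinearPMap.mem_graph_iff _).1 hg
  obtain ⟨uy, hum⟩ := u
  have h1 : uy = y := hu.1
  have h2 : A ⟨uy, hum⟩ = z := hu.2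
  subst h1
  exact ⟨hum, h2⟩

/-- A self-adjoint operator is symmetric. -/
lemma sa_symm (hA : IsSelfAdjoint A) (x y : A.domain) :
    (inner ℂ (A x) (y : H) : ℂ) = inner ℂ (x : H) (A y) := by
  have hd := hA.dense_domain
  have hA' : A.adjoint = A := hA
  have hg : ((y : H), A y) ∈ A.adjoint.graph := by
    rw [hA']; exact LinearPMap.mem_graph A y
  obtain ⟨w, hw⟩ := (LinearPMap.mem_graph_iff _).1 hg
  have h1 : (w : H) = (y : H) := hw.1
  have h2 : A.adjoint w = A y := hw.2
  have hfa := LinearPMap.adjoint_isFormalAdjoint hd w x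
  -- hfa : ⟪A† w, x⟫ = ⟪w, A x⟫
  have := congrArg (starRingEnd ℂ) hfa
  rw [inner_conj_symm, inner_conj_symm, h2, h1] at this
  exact this.symm

/-- Under self-adjointness, the commutator form condition is equivalent to invariance of
the domain together with a pointwise commutation identity. -/
lemma comm_iff (hA : IsSelfAdjoint A) {B C : H →L[ℂ] H} :
    IsCommutatorOf A B C ↔
      ∀ y : A.domain, ∃ hy : B y ∈ A.domain,
        A ⟨B (y : H), hy⟩ = B (A y) + C (y : H) := by
  constructor
  · intro h y
    apply sa_max hA
    intro x
    rw [inner_add_right]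
    linear_combination h x y
  · intro h x y
    obtain ⟨hy, hval⟩ := h y
    have hsymm := sa_symm hA x ⟨B (y : H), hy⟩
    rw [hval, inner_add_right] at hsymm
    rw [hsymm]
    ring

lemma comm_add {B B' C C' : H →L[ℂ] H} (h : IsCommutatorOf A B C)
    (h' : IsCommutatorOf A B' C') : IsCommutatorOf A (B + B') (C + C') := by
  intro x y
  simp only [ContinuousLinearMap.add_apply, inner_add_right]
  linear_combination h x y + h' x y

lemma comm_neg {B C : H →L[ℂ] H} (h : IsCommutatorOf A B C) :
    IsCommutatorOf A (-B) (-C) := by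
  intro x y
  simp only [ContinuousLinearMap.neg_apply, inner_neg_right]
  linear_combination -(h x y)

lemma comm_star {B C : H →L[ℂ] H} (h : IsCommutatorOf A B C) :
    IsCommutatorOf A (star B) (-(star C)) := by
  intro x y
  have hB1 : (inner ℂ (A x) ((star B) (y : H)) : ℂ) = inner ℂ (B (A x)) (y : H) := by
    rw [ContinuousLinearMap.star_eq_adjoint, ContinuousLinearMap.adjoint_inner_right]
  have hB2 : (inner ℂ (x : H) ((star B) (A y)) : ℂ) = inner ℂ (B (x : H)) (A y) := by
    rw [ContinuousLinearMap.star_eq_adjoint, ContinuousLinearMap.adjoint_inner_right]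
  have hC : (inner ℂ (x : H) ((star C) (y : H)) : ℂ) = inner ℂ (C (x : H)) (y : H) := by
    rw [ContinuousLinearMap.star_eq_adjoint, ContinuousLinearMap.adjoint_inner_right]
  have hyx := congrArg (starRingEnd ℂ) (h y x)
  simp only [map_sub, inner_conj_symm] at hyx
  rw [hB1, hB2, ContinuousLinearMap.neg_apply, inner_neg_right, hC]
  linear_combination -hyx

lemma comm_mul (hA : IsSelfAdjoint A) {B B' C C' : H →L[ℂ] H}
    (h : IsCommutatorOf A B C) (h' : IsCommutatorOf A B' C') :
    IsCommutatorOf A (B * B') (B * C' + C * B') := by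
  rw [comm_iff hA] at h h' ⊢
  intro y
  obtain ⟨hy', hval'⟩ := h' y
  obtain ⟨hy, hval⟩ := h ⟨B' (y : H), hy'⟩
  refine ⟨hy, ?_⟩
  have step : A ⟨(B * B') (y : H), hy⟩ = B (A ⟨B' (y : H), hy'⟩) + C (B' (y : H)) := hval
  rw [step, hval']
  simp only [ContinuousLinearMap.add_apply, ContinuousLinearMap.mul_apply, map_add]
  abel

/-- `C^k` as nested existentials. -/
def Ck (A : H →ₗ.[ℂ] H) : ℕ → (H →L[ℂ] H) → Prop
  | 0, _ => True
  | (k + 1), B => ∃ C, IsCommutatorOf A B C ∧ Ck A k C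

lemma ck_mono : ∀ {k : ℕ} {B : H →L[ℂ] H}, Ck A (k + 1) B → Ck A k B := by
  intro k
  induction k with
  | zero => intro B _; trivial
  | succ k ih =>
    rintro B ⟨C, hC, h⟩
    exact ⟨C, hC, ih h⟩

lemma ck_neg : ∀ {k : ℕ} {B : H →L[ℂ] H}, Ck A k B → Ck A k (-B) := by
  intro k
  induction k with
  | zero => intro B _; trivial
  | succ k ih =>
    rintro B ⟨C, hC, h⟩
    exact ⟨-C, comm_neg hC, ih h⟩

lemma ck_add : ∀ {k : ℕ} {B B' : H →L[ℂ] H}, Ck A k B → Ck A k B' → Ck A k (B + B') := by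
  intro k
  induction k with
  | zero => intro B B' _ _; trivial
  | succ k ih =>
    rintro B B' ⟨C, hC, h⟩ ⟨C', hC', h'⟩
    exact ⟨C + C', comm_add hC hC', ih h h'⟩

lemma ck_star : ∀ {k : ℕ} {B : H →L[ℂ] H}, Ck A k B → Ck A k (star B) := by
  intro k
  induction k with
  | zero => intro B _; trivial
  | succ k ih =>
    rintro B ⟨C, hC, h⟩
    exact ⟨-(star C), comm_star hC, ck_neg (ih h)⟩

lemma ck_mul (hA : IsSelfAdjoint A) :
    ∀ {k : ℕ} {B B' : H →L[ℂ] H}, Ck A k B → Ck A k B' → Ck A k (B * B') := by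
  intro k
  induction k with
  | zero => intro B B' _ _; trivial
  | succ k ih =>
    rintro B B' hB hB'
    obtain ⟨C, hC, h⟩ := hB
    obtain ⟨C', hC', h'⟩ := hB'
    exact ⟨B * C' + C * B', comm_mul hA hC hC',
      ck_add (ih (ck_mono ⟨C, hC, h⟩) h') (ih h (ck_mono ⟨C', hC', h'⟩))⟩

lemma memCk_iff_ck {k : ℕ} {B : H →L[ℂ] H} : MemCk A B k ↔ Ck A k B := by
  constructor
  · rintro ⟨D, hD⟩
    induction k generalizing B D with
    | zero => trivial
    | succ k ih =>
      obtain ⟨hD0, hDs⟩ := hD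
      refine ⟨D 1, ?_, ih (B := D 1) (D := fun j => D (j + 1)) ⟨rfl, fun j hj => hDs (j + 1) (by omega)⟩⟩
      rw [← hD0]
      exact hDs 0 (by omega)
  · intro h
    induction k generalizing B with
    | zero => exact ⟨fun _ => B, rfl, fun j hj => absurd hj (by omega)⟩
    | succ k ih =>
      obtain ⟨C, hC, hCk⟩ := h
      obtain ⟨D', hD'0, hD's⟩ := ih hCk
      refine ⟨fun j => if j = 0 then B else D' (j - 1), rfl, ?_⟩
      intro j hj
      match j with
      | 0 => simpa [hD'0] using hC
      | (i + 1) =>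
        simpa using hD's i (by omega)

end Aux

/-- For a unitary `U` and `k ≥ 1`, the following are equivalent: `U ∈ C^k(A)`;
`U* ∈ C^k(A)`; `U ∈ C¹(A)` and `U*AU − A = U*(ad_A U) ∈ C^{k−1}(A)`;
`U ∈ C¹(A)` and `A − UAU* = (ad_A U)U* ∈ C^{k−1}(A)`. -/
theorem stmt_5 (A : H →ₗ.[ℂ] H) (hA : IsSelfAdjoint A) (k : ℕ) (hk : 1 ≤ k)
    (U : H →L[ℂ] H) (hU : U ∈ unitary (H →L[ℂ] H)) :
    (MemCk A U k ↔ MemCk A (star U) k) ∧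
    (MemCk A U k ↔ ∃ C : H →L[ℂ] H, IsCommutatorOf A U C ∧ MemCk A (star U * C) (k - 1)) ∧
    (MemCk A U k ↔ ∃ C : H →L[ℂ] H, IsCommutatorOf A U C ∧ MemCk A (C * star U) (k - 1)) := by
  obtain ⟨m, rfl⟩ : ∃ m, k = m + 1 := ⟨k - 1, by omega⟩
  clear hk
  simp only [Nat.add_sub_cancel, memCk_iff_ck]
  have hU1 : star U * U = 1 := hU.1
  have hU2 : U * star U = 1 := hU.2
  refine ⟨⟨fun h => ck_star h, fun h => by simpa using ck_star h⟩, ?_, ?_⟩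
  · constructor
    · rintro ⟨C, hC, hCk⟩
      exact ⟨C, hC, ck_mul hA (ck_star (ck_mono ⟨C, hC, hCk⟩)) hCk⟩
    · intro h
      induction m with
      | zero =>
        obtain ⟨C, hC, _⟩ := h
        exact ⟨C, hC, trivial⟩
      | succ m ih =>
        obtain ⟨C, hC, hCk⟩ := h
        have hU' : Ck A (m + 1) U := ih ⟨C, hC, ck_mono hCk⟩
        have : Ck A (m + 1) (U * (star U * C)) := ck_mul hA hU' hCk
        rw [← mul_assoc, hU2, one_mul] at this
        exact ⟨C, hC, this⟩
  · constructor
    · rintro ⟨C, hC, hCk⟩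
      exact ⟨C, hC, ck_mul hA hCk (ck_star (ck_mono ⟨C, hC, hCk⟩))⟩
    · intro h
      induction m with
      | zero =>
        obtain ⟨C, hC, _⟩ := h
        exact ⟨C, hC, trivial⟩
      | succ m ih =>
        obtain ⟨C, hC, hCk⟩ := h
        have hU' : Ck A (m + 1) U := ih ⟨C, hC, ck_mono hCk⟩
        have : Ck A (m + 1) ((C * star U) * U) := ck_mul hA hCk hU'
        rw [mul_assoc, hU1, mul_one] at this
        exact ⟨C, hC, this⟩
end

section
/- Let (B_n)_{n∈ℕ} be a sequence of bounded operators on H, each of class C^1(A). Assume that the sequences (B_n) and (ad_A B_n) converge strongly to bounded operators C_0 and C_1 respectively. Then C_0 belongs to C^1(A) and ad_A(C_0) = C_1. -/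
open Filter

variable {H : Type} [NormedAddCommGroup H] [InnerProductSpace ℂ H] [CompleteSpace H]

/-- If `(Bₙ) ⊆ C¹(A)` with `ad_A Bₙ = Cₙ`, and `Bₙ → C₀`, `Cₙ → C₁` strongly, then
`C₀ ∈ C¹(A)` with `ad_A C₀ = C₁`. -/
theorem stmt_6 (A : H →ₗ.[ℂ] H) (hA : IsSelfAdjoint A)
    (B C : ℕ → H →L[ℂ] H) (hBC : ∀ n, IsCommutatorOf A (B n) (C n))
    (C₀ C₁ : H →L[ℂ] H)
    (hB : ∀ x : H, Tendsto (fun n => B n x) atTop (nhds (C₀ x)))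
    (hC : ∀ x : H, Tendsto (fun n => C n x) atTop (nhds (C₁ x))) :
    IsCommutatorOf A C₀ C₁ := by
  intro x y
  have h1 : Tendsto (fun n => (inner ℂ (A x) (B n (y : H)) : ℂ) - inner ℂ (x : H) (B n (A y)))
      atTop (nhds ((inner ℂ (A x) (C₀ (y : H)) : ℂ) - inner ℂ (x : H) (C₀ (A y)))) :=
    (Filter.Tendsto.inner tendsto_const_nhds (hB (y : H))).sub
      (Filter.Tendsto.inner tendsto_const_nhds (hB (A y)))
  have h2 : Tendsto (fun n => (inner ℂ (A x) (B n (y : H)) : ℂ) - inner ℂ (x : H) (B n (A y)))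
      atTop (nhds ((inner ℂ (x : H) (C₁ (y : H)) : ℂ))) := by
    simpa only [fun n => hBC n x y] using
      Filter.Tendsto.inner (tendsto_const_nhds : Tendsto (fun _ : ℕ => (x : H)) atTop _)
        (hC (y : H))
  exact tendsto_nhds_unique h1 h2
end

section
/- Let k ∈ ℕ and let (B_n)_{n∈ℕ} be a sequence of bounded operators on H, each of class C^k(A). Assume that for every j ∈ {0,…,k} the sequence (ad_A^j B_n) converges strongly to a bounded operator C_j. Then C_0 = s-lim B_n belongs to C^k(A) and ad_A^j(C_0) = C_j for all j ∈ {0,…,k}. -/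
open Filter

variable {H : Type} [NormedAddCommGroup H] [InnerProductSpace ℂ H] [CompleteSpace H]

/-- If `(Bₙ) ⊆ C^k(A)`, with iterated commutator chains `Dₙ` (so `Dₙ 0 = Bₙ` and
`ad_A^j Bₙ = Dₙ j`), and for every `j ≤ k` the sequence `(ad_A^j Bₙ)ₙ` converges
strongly to a bounded operator `C j`, then `C 0 = s-lim Bₙ` belongs to `C^k(A)` and
`ad_A^j (C 0) = C j` for all `j ≤ k`. -/
theorem stmt_7 (A : H →ₗ.[ℂ] H) (hA : IsSelfAdjoint A) (k : ℕ)
    (B : ℕ → H →L[ℂ] H) (D : ℕ → ℕ → H →L[ℂ] H)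
    (hchain : ∀ n, IsAdChain A (B n) (D n) k)
    (C : ℕ → H →L[ℂ] H)
    (hconv : ∀ j ≤ k, ∀ x : H, Tendsto (fun n => D n j x) atTop (nhds (C j x))) :
    IsAdChain A (C 0) C k := by
  refine ⟨rfl, fun j hj x y => ?_⟩
  have h1 : Tendsto (fun n => (inner ℂ (A x) (D n j (y : H)) : ℂ)
      - inner ℂ (x : H) (D n j (A y))) atTop
      (nhds ((inner ℂ (A x) (C j (y : H)) : ℂ) - inner ℂ (x : H) (C j (A y)))) := by
    exact ((Tendsto.inner tendsto_const_nhds (hconv j hj.le (y : H))).sub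
      (Tendsto.inner tendsto_const_nhds (hconv j hj.le (A y))))
  have h2 : Tendsto (fun n => (inner ℂ (x : H) (D n (j+1) (y : H)) : ℂ)) atTop
      (nhds (inner ℂ (x : H) (C (j+1) (y : H)))) :=
    Tendsto.inner tendsto_const_nhds (hconv (j+1) hj (y : H))
  have heq : (fun n => (inner ℂ (A x) (D n j (y : H)) : ℂ)
      - inner ℂ (x : H) (D n j (A y)))
      = fun n => (inner ℂ (x : H) (D n (j+1) (y : H)) : ℂ) := by
    funext n; exact (hchain n).2 j hj x y
  rw [heq] at h1
  exact tendsto_nhds_unique h1 h2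
end

section
/- (Dyson expansions preserve C^k(A)) Let k ∈ ℕ, T > 0 and let (V(t,s))_{(s,t)∈[0,T]^2} be a family of bounded operators on H such that for each j ∈ {0,…,k} the map (t,s) ↦ ad_A^j(V(t,s)) is strongly continuous on [0,T]^2 (in particular each V(t,s) ∈ C^k(A)). Then for every (s,t) ∈ [0,T]^2 the operator Ω(t,s) defined by the norm-convergent Dyson series Ω(t,s) = I + Σ_{j=1}^∞ (−i)^j ∫_s^t ∫_s^{τ_1} … ∫_s^{τ_{j−1}} V(τ_1,s) ⋯ V(τ_j,s) dτ_j … dτ_1 belongs to C^k(A). -/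
open Set MeasureTheory Finset

variable {H : Type} [NormedAddCommGroup H] [InnerProductSpace ℂ H] [CompleteSpace H]

/-- pointwise version of: C^1 operators map the domain into the domain. -/
lemma aux_mem_domain (A : H →ₗ.[ℂ] H) (hA : IsSelfAdjoint A) (z w : H)
    (h : ∀ x : A.domain, (inner ℂ (A x) z : ℂ) = inner ℂ (x : H) w) :
    ∃ hz : z ∈ A.domain, A ⟨z, hz⟩ = w := by
  have hA' : A.adjoint = A := LinearPMap.isSelfAdjoint_def.mp hA
  have hD := hA.dense_domain
  have key : ∀ x : A.domain, (inner ℂ w (x : H) : ℂ) = inner ℂ z (A x) := by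
    intro x
    rw [← inner_conj_symm, ← h x, inner_conj_symm]
  have hz' : z ∈ A.adjoint.domain :=
    LinearPMap.mem_adjoint_domain_of_exists z ⟨w, key⟩
  have hdom : A.adjoint.domain = A.domain := congrArg LinearPMap.domain hA'
  have hz : z ∈ A.domain := hdom ▸ hz'
  refine ⟨hz, ?_⟩
  have hval : A.adjoint ⟨z, hz'⟩ = w :=
    LinearPMap.adjoint_apply_eq hD ⟨z, hz'⟩ (fun x => key x)
  obtain ⟨hde, happ⟩ := LinearPMap.ext_iff.mp hA'
  rw [← hval]
  exact (happ (x := z) (hf := hz') (hg := hz)).symm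

/-- symmetry of a self-adjoint operator -/
lemma aux_symm (A : H →ₗ.[ℂ] H) (hA : IsSelfAdjoint A) (x y : A.domain) :
    (inner ℂ (A x) (y : H) : ℂ) = inner ℂ (x : H) (A y) := by
  have hA' : A.adjoint = A := LinearPMap.isSelfAdjoint_def.mp hA
  have hD := hA.dense_domain
  have hdom : A.adjoint.domain = A.domain := congrArg LinearPMap.domain hA'
  have hx' : (x : H) ∈ A.adjoint.domain := hdom.symm ▸ x.2
  have h1 := LinearPMap.adjoint_isFormalAdjoint hD ⟨(x : H), hx'⟩ y
  obtain ⟨hde, happ⟩ := LinearPMap.ext_iff.mp hA'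
  have h2 : A.adjoint ⟨(x : H), hx'⟩ = A x := happ (x := (x : H)) (hf := hx') (hg := x.2)
  rw [← h2]
  exact h1

lemma aux_comp_cont {α : Type} [TopologicalSpace α] {K : Set α} {B : α → H →L[ℂ] H} {M : ℝ}
    (hM : ∀ p ∈ K, ‖B p‖ ≤ M) (hB : ∀ x : H, ContinuousOn (fun p => B p x) K)
    {g : α → H} (hg : ContinuousOn g K) : ContinuousOn (fun p => B p (g p)) K := by
  intro q hq
  have h1 : ContinuousWithinAt (fun p => B p (g q)) K q := hB (g q) q hq
  have h0 : Filter.Tendsto (fun p => B p (g p - g q)) (nhdsWithin q K) (nhds 0) := by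
    refine squeeze_zero_norm' (a := fun p => M * ‖g p - g q‖) ?_ ?_
    · filter_upwards [self_mem_nhdsWithin] with p hp
      calc ‖B p (g p - g q)‖ ≤ ‖B p‖ * ‖g p - g q‖ := (B p).le_opNorm _
        _ ≤ M * ‖g p - g q‖ := by
            apply mul_le_mul_of_nonneg_right (hM p hp) (norm_nonneg _)
    · have hgq : Filter.Tendsto g (nhdsWithin q K) (nhds (g q)) := hg q hq
      have : Filter.Tendsto (fun p => g p - g q) (nhdsWithin q K) (nhds (g q - g q)) :=
        hgq.sub tendsto_const_nhds
      rw [sub_self] at this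
      simpa using (this.norm.const_mul M)
  have := h0.add h1
  simp only [map_sub] at this
  simpa [ContinuousWithinAt] using this

lemma aux_pascal (m : ℕ) (a : ℕ → ℂ) :
    ∑ i ∈ range (m+1), (m.choose i : ℂ) * (a i + a (i+1))
      = ∑ i ∈ range (m+2), ((m+1).choose i : ℂ) * a i := by
  have hR : ∑ i ∈ range (m+2), ((m+1).choose i : ℂ) * a i
      = ∑ i ∈ range (m+1), ((m+1).choose (i+1) : ℂ) * a (i+1) + ((m+1).choose 0 : ℂ) * a 0 :=
    Finset.sum_range_succ' _ _
  have hL1 : ∑ i ∈ range (m+1), (m.choose i : ℂ) * a i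
      = ∑ i ∈ range m, (m.choose (i+1) : ℂ) * a (i+1) + (m.choose 0 : ℂ) * a 0 :=
    Finset.sum_range_succ' _ _
  have hL2 : ∑ i ∈ range (m+1), (m.choose (i+1) : ℂ) * a (i+1)
      = ∑ i ∈ range m, (m.choose (i+1) : ℂ) * a (i+1) + (m.choose (m+1) : ℂ) * a (m+1) :=
    Finset.sum_range_succ _ _
  simp only [mul_add, Finset.sum_add_distrib] at *
  rw [hL1, hR]
  simp only [Nat.choose_succ_succ, Nat.choose_zero_right, Nat.choose_succ_self, Nat.cast_add,
    Nat.cast_one, Nat.cast_zero, Nat.cast_ofNat, add_mul, Finset.sum_add_distrib] at hL2 ⊢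
  rw [hL2]
  ring


noncomputable def FF (Dv : ℝ → ℝ → ℕ → H →L[ℂ] H) (s : ℝ) : ℕ → ℕ → ℝ → H → H
  | 0, m, _t, x => if m = 0 then x else 0
  | (j+1), m, t, x => ∫ τ in s..t,
      ∑ i ∈ range (m+1), ((m.choose i : ℂ)) • Dv τ s i (FF Dv s j (m - i) τ x)

noncomputable def GG (Dv : ℝ → ℝ → ℕ → H →L[ℂ] H) (s : ℝ) (j m : ℕ) (x : H) (τ : ℝ) : H :=
  ∑ i ∈ range (m+1), ((m.choose i : ℂ)) • Dv τ s i (FF Dv s j (m - i) τ x)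

lemma FF_succ (Dv : ℝ → ℝ → ℕ → H →L[ℂ] H) (s t : ℝ) (j m : ℕ) (x : H) :
    FF Dv s (j+1) m t x = ∫ τ in s..t, GG Dv s j m x τ := rfl

lemma FF_props (A : H →ₗ.[ℂ] H) (hA : IsSelfAdjoint A) (k : ℕ) (T : ℝ)
    (Dv : ℝ → ℝ → ℕ → H →L[ℂ] H)
    (hchain : ∀ t ∈ Icc (0:ℝ) T, ∀ s ∈ Icc (0:ℝ) T, ∀ j < k,
      ∀ x y : A.domain,
        (inner ℂ (A x) (Dv t s j (y : H)) : ℂ) - inner ℂ (x : H) (Dv t s j (A y))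
          = inner ℂ (x : H) (Dv t s (j+1) (y : H)))
    (hcont : ∀ j ≤ k, ∀ x : H,
      ContinuousOn (fun p : ℝ × ℝ => Dv p.1 p.2 j x) (Icc (0:ℝ) T ×ˢ Icc (0:ℝ) T))
    (s : ℝ) (hs : s ∈ Icc (0:ℝ) T)
    (M : ℝ) (hM0 : 0 ≤ M)
    (hM : ∀ j ≤ k, ∀ t ∈ Icc (0:ℝ) T, ∀ σ ∈ Icc (0:ℝ) T, ‖Dv t σ j‖ ≤ M) :
    ∀ j : ℕ, ∀ m ≤ k,
      ((∀ x : H, ContinuousOn (fun τ => FF Dv s j m τ x) (Icc (0:ℝ) T)) ∧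
       (∀ t ∈ Icc (0:ℝ) T, ∀ x : H,
         ‖FF Dv s j m t x‖ ≤ ((2:ℝ)^k * M)^j * |t - s|^j / j.factorial * ‖x‖) ∧
       (∀ t ∈ Icc (0:ℝ) T, ∀ x y : H,
         FF Dv s j m t (x + y) = FF Dv s j m t x + FF Dv s j m t y) ∧
       (∀ t ∈ Icc (0:ℝ) T, ∀ (c : ℂ) (x : H),
         FF Dv s j m t (c • x) = c • FF Dv s j m t x) ∧
       (m < k → ∀ t ∈ Icc (0:ℝ) T, ∀ x y : A.domain,
         (inner ℂ (A x) (FF Dv s j m t (y:H)) : ℂ) - inner ℂ (x : H) (FF Dv s j m t (A y))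
           = inner ℂ (x : H) (FF Dv s j (m+1) t (y:H)))) := by
  have hT0 : (0:ℝ) ≤ T := hs.1.trans hs.2
  intro j
  induction j with
  | zero =>
    intro m hm
    have h0 : ∀ (m : ℕ) t x, FF Dv s 0 m t x = if m = 0 then x else 0 := fun _ _ _ => rfl
    refine ⟨?_, ?_, ?_, ?_, ?_⟩
    · intro x
      by_cases hm0 : m = 0 <;> simp only [h0, hm0, if_pos, if_neg, if_true, if_false] <;>
        exact continuousOn_const
    · intro t ht x
      by_cases hm0 : m = 0 <;>
        simp only [h0, hm0, if_pos, if_neg, if_true, if_false, pow_zero, Nat.factorial_zero,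
          one_mul, Nat.cast_one, div_one] <;> simp [norm_nonneg]
    · intro t ht x y
      by_cases hm0 : m = 0 <;> simp [h0, hm0]
    · intro t ht c x
      by_cases hm0 : m = 0 <;> simp [h0, hm0]
    · intro hmk t ht x y
      by_cases hm0 : m = 0
      · subst hm0
        simp only [h0, if_pos, if_neg, one_ne_zero, if_false, if_true]
        rw [aux_symm A hA x y]
        simp
      · simp [h0, hm0]
  | succ j ih =>
    intro m hm
    have hC0 : (0:ℝ) ≤ (2:ℝ)^k * M := by positivity
    have hcontD : ∀ i ≤ k, ∀ x : H, ContinuousOn (fun τ => Dv τ s i x) (Icc (0:ℝ) T) := by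
      intro i hi x
      exact (hcont i hi x).comp ((continuous_id.prodMk continuous_const).continuousOn)
        (fun τ hτ => ⟨hτ, hs⟩)
    have key_cont : ∀ m' ≤ k, ∀ x : H, ContinuousOn (GG Dv s j m' x) (Icc (0:ℝ) T) := by
      intro m' hm' x
      apply continuousOn_finset_sum
      intro i hi
      have him : i ≤ m' := Nat.lt_succ_iff.mp (Finset.mem_range.mp hi)
      have hik : i ≤ k := him.trans hm'
      exact (aux_comp_cont (fun τ hτ => hM i hik τ hτ s hs) (hcontD i hik)
        ((ih (m' - i) ((Nat.sub_le _ _).trans hm')).1 x)).const_smul _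
    have key_bound : ∀ m' ≤ k, ∀ τ ∈ Icc (0:ℝ) T, ∀ x : H,
        ‖GG Dv s j m' x τ‖ ≤ ((2:ℝ)^k * M)^(j+1) * ‖x‖ / j.factorial * |τ - s|^j := by
      intro m' hm' τ hτ x
      have hb : ∀ i ∈ range (m'+1),
          ‖((m'.choose i : ℂ)) • Dv τ s i (FF Dv s j (m' - i) τ x)‖
            ≤ (m'.choose i : ℝ) * (M * (((2:ℝ)^k * M)^j * |τ - s|^j / j.factorial * ‖x‖)) := by
        intro i hi
        have him : i ≤ m' := Nat.lt_succ_iff.mp (Finset.mem_range.mp hi)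
        have hik : i ≤ k := him.trans hm'
        rw [norm_smul]
        have h1 : ‖((m'.choose i : ℂ))‖ = (m'.choose i : ℝ) := by
          simp [Complex.norm_natCast]
        rw [h1]
        apply mul_le_mul_of_nonneg_left ?_ (by positivity)
        calc ‖Dv τ s i (FF Dv s j (m' - i) τ x)‖
            ≤ ‖Dv τ s i‖ * ‖FF Dv s j (m' - i) τ x‖ := (Dv τ s i).le_opNorm _
          _ ≤ M * (((2:ℝ)^k * M)^j * |τ - s|^j / j.factorial * ‖x‖) := by
              apply mul_le_mul (hM i hik τ hτ s hs)
                ((ih (m' - i) ((Nat.sub_le _ _).trans hm')).2.1 τ hτ x)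
                (norm_nonneg _) hM0
      calc ‖GG Dv s j m' x τ‖
          ≤ ∑ i ∈ range (m'+1), ‖((m'.choose i : ℂ)) • Dv τ s i (FF Dv s j (m' - i) τ x)‖ :=
            norm_sum_le _ _
        _ ≤ ∑ i ∈ range (m'+1),
              (m'.choose i : ℝ) * (M * (((2:ℝ)^k * M)^j * |τ - s|^j / j.factorial * ‖x‖)) :=
            Finset.sum_le_sum hb
        _ = (2:ℝ)^m' * (M * (((2:ℝ)^k * M)^j * |τ - s|^j / j.factorial * ‖x‖)) := by
            rw [← Finset.sum_mul]
            congr 1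
            rw [← Nat.cast_sum, Nat.sum_range_choose]
            push_cast; ring
        _ ≤ (2:ℝ)^k * (M * (((2:ℝ)^k * M)^j * |τ - s|^j / j.factorial * ‖x‖)) := by
            apply mul_le_mul_of_nonneg_right ?_ (by positivity)
            gcongr <;> norm_num
        _ = ((2:ℝ)^k * M)^(j+1) * ‖x‖ / j.factorial * |τ - s|^j := by
            rw [pow_succ]; ring
    have key_int : ∀ m' ≤ k, ∀ x : H, ∀ a ∈ Icc (0:ℝ) T, ∀ b ∈ Icc (0:ℝ) T,
        IntervalIntegrable (GG Dv s j m' x) volume a b := by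
      intro m' hm' x a ha b hb
      exact ((key_cont m' hm' x).mono (uIcc_subset_Icc ha hb)).intervalIntegrable
    refine ⟨?_, ?_, ?_, ?_, ?_⟩
    · -- continuity
      intro x
      have h1 := intervalIntegral.continuousOn_primitive_interval'
        (key_int m hm x 0 ⟨le_refl 0, hT0⟩ T ⟨hT0, le_refl T⟩)
        (by rw [uIcc_of_le hT0]; exact hs)
      rw [uIcc_of_le hT0] at h1
      simp only [FF_succ]
      exact h1
    · -- bound
      intro t ht x
      have huIcc : uIcc s t ⊆ Icc (0:ℝ) T := uIcc_subset_Icc hs ht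
      rw [FF_succ]
      have hint1 : IntegrableOn (fun τ => ‖GG Dv s j m x τ‖) (Set.uIoc s t) volume :=
        (key_int m hm x s hs t ht).norm.def'
      have hint2 : IntegrableOn
          (fun τ => ((2:ℝ)^k * M)^(j+1) * ‖x‖ / j.factorial * |τ - s|^j) (Set.uIoc s t) volume := by
        apply Continuous.integrableOn_uIoc
        fun_prop
      calc ‖∫ τ in s..t, GG Dv s j m x τ‖
          ≤ ∫ τ in Set.uIoc s t, ‖GG Dv s j m x τ‖ :=
            intervalIntegral.norm_integral_le_integral_norm_uIoc
        _ ≤ ∫ τ in Set.uIoc s t, ((2:ℝ)^k * M)^(j+1) * ‖x‖ / j.factorial * |τ - s|^j := by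
            apply setIntegral_mono_on hint1 hint2 measurableSet_uIoc
            intro τ hτ
            exact key_bound m hm τ (huIcc (uIoc_subset_uIcc hτ)) x
        _ = ((2:ℝ)^k * M)^(j+1) * ‖x‖ / j.factorial * (|t - s|^(j+1) / (j+1)) := by
            rw [MeasureTheory.integral_const_mul, integral_pow_abs_sub_uIoc]
        _ = ((2:ℝ)^k * M)^(j+1) * |t - s|^(j+1) / (j+1).factorial * ‖x‖ := by
            rw [Nat.factorial_succ]
            have h1 : (j.factorial : ℝ) ≠ 0 := Nat.cast_ne_zero.mpr j.factorial_ne_zero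
            have h2 : ((j:ℝ) + 1) ≠ 0 := by positivity
            push_cast
            field_simp
    · -- additivity
      intro t ht x y
      have huIcc : uIcc s t ⊆ Icc (0:ℝ) T := uIcc_subset_Icc hs ht
      rw [FF_succ, FF_succ, FF_succ,
        ← intervalIntegral.integral_add (key_int m hm x s hs t ht) (key_int m hm y s hs t ht)]
      apply intervalIntegral.integral_congr
      intro τ hτ
      have hτT : τ ∈ Icc (0:ℝ) T := huIcc hτ
      simp only [GG, ← Finset.sum_add_distrib]
      apply Finset.sum_congr rfl
      intro i _
      rw [(ih (m - i) ((Nat.sub_le _ _).trans hm)).2.2.1 τ hτT x y, map_add, smul_add]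
    · -- homogeneity
      intro t ht c x
      have huIcc : uIcc s t ⊆ Icc (0:ℝ) T := uIcc_subset_Icc hs ht
      rw [FF_succ, FF_succ, ← intervalIntegral.integral_smul]
      apply intervalIntegral.integral_congr
      intro τ hτ
      have hτT : τ ∈ Icc (0:ℝ) T := huIcc hτ
      simp only [GG, Finset.smul_sum]
      apply Finset.sum_congr rfl
      intro i _
      rw [(ih (m - i) ((Nat.sub_le _ _).trans hm)).2.2.2.1 τ hτT c x,
        (Dv τ s i).map_smul, smul_comm]
    · -- commutator identity
      intro hmk t ht x y
      have huIcc : uIcc s t ⊆ Icc (0:ℝ) T := uIcc_subset_Icc hs ht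
      have hm1k : m + 1 ≤ k := hmk
      have hinty := key_int m hm (y:H) s hs t ht
      have hintAy := key_int m hm (A y) s hs t ht
      have hint3 := key_int (m+1) hm1k (y:H) s hs t ht
      have h1 : (inner ℂ (A x) (FF Dv s (j+1) m t (y:H)) : ℂ)
          = ∫ τ in s..t, inner ℂ (A x) (GG Dv s j m (y:H) τ) := by
        rw [FF_succ]
        exact ((innerSL ℂ ((A x : H))).intervalIntegral_comp_comm hinty).symm
      have h2 : (inner ℂ (x:H) (FF Dv s (j+1) m t (A y)) : ℂ)
          = ∫ τ in s..t, inner ℂ (x:H) (GG Dv s j m (A y) τ) := by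
        rw [FF_succ]
        exact ((innerSL ℂ ((x:H))).intervalIntegral_comp_comm hintAy).symm
      have h3 : (inner ℂ (x:H) (FF Dv s (j+1) (m+1) t (y:H)) : ℂ)
          = ∫ τ in s..t, inner ℂ (x:H) (GG Dv s j (m+1) (y:H) τ) := by
        rw [FF_succ]
        exact ((innerSL ℂ ((x:H))).intervalIntegral_comp_comm hint3).symm
      rw [h1, h2, h3]
      have hi1 : IntervalIntegrable (fun τ => (inner ℂ ((A x : H)) (GG Dv s j m (y:H) τ) : ℂ))
          volume s t :=
        (((innerSL ℂ ((A x : H))).continuous.comp_continuousOn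
          (key_cont m hm (y:H))).mono huIcc).intervalIntegrable
      have hi2 : IntervalIntegrable (fun τ => (inner ℂ ((x:H)) (GG Dv s j m (A y) τ) : ℂ))
          volume s t :=
        (((innerSL ℂ ((x:H))).continuous.comp_continuousOn
          (key_cont m hm (A y))).mono huIcc).intervalIntegrable
      rw [← intervalIntegral.integral_sub hi1 hi2]
      apply intervalIntegral.integral_congr
      intro τ hτ
      dsimp only
      have hτT : τ ∈ Icc (0:ℝ) T := huIcc hτ
      have expand1 : (inner ℂ ((A x : H)) (GG Dv s j m (y:H) τ) : ℂ)
          = ∑ i ∈ range (m+1), (m.choose i : ℂ) *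
              inner ℂ ((A x : H)) (Dv τ s i (FF Dv s j (m - i) τ (y:H))) := by
        simp [GG, inner_sum, inner_smul_right]
      have expand2 : (inner ℂ ((x:H)) (GG Dv s j m (A y) τ) : ℂ)
          = ∑ i ∈ range (m+1), (m.choose i : ℂ) *
              inner ℂ ((x:H)) (Dv τ s i (FF Dv s j (m - i) τ (A y))) := by
        simp [GG, inner_sum, inner_smul_right]
      have expand3 : (inner ℂ ((x:H)) (GG Dv s j (m+1) (y:H) τ) : ℂ)
          = ∑ i ∈ range (m+2), ((m+1).choose i : ℂ) *
              inner ℂ ((x:H)) (Dv τ s i (FF Dv s j (m + 1 - i) τ (y:H))) := by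
        simp [GG, inner_sum, inner_smul_right]
      rw [expand1, expand2, expand3, ← Finset.sum_sub_distrib,
        ← aux_pascal m (fun i => inner ℂ ((x:H)) (Dv τ s i (FF Dv s j (m + 1 - i) τ (y:H))))]
      apply Finset.sum_congr rfl
      intro i hi
      have him : i ≤ m := Nat.lt_succ_iff.mp (Finset.mem_range.mp hi)
      have hik : i < k := lt_of_le_of_lt him hmk
      have hmik : m - i < k := lt_of_le_of_lt (Nat.sub_le m i) hmk
      have hd := (ih (m - i) (le_of_lt hmik)).2.2.2.2 hmik τ hτT
      obtain ⟨hz, hAz⟩ := aux_mem_domain A hA (FF Dv s j (m - i) τ (y:H))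
        (FF Dv s j (m - i) τ (A y) + FF Dv s j (m - i + 1) τ (y:H)) (fun x' => by
          have h5 := hd x' y
          rw [inner_add_right, ← h5]
          ring)
      have hcomm := hchain τ hτT s hs i hik x ⟨FF Dv s j (m - i) τ (y:H), hz⟩
      rw [hAz, map_add, inner_add_right] at hcomm
      have e1 : m + 1 - i = (m - i) + 1 := by omega
      have e2 : m + 1 - (i + 1) = m - i := by omega
      simp only [e1, e2]
      linear_combination (m.choose i : ℂ) * hcomm

/-- Dyson expansions preserve `C^k(A)`.  The family `(V(t,s))` has iterated commutator
chains `Dv t s` (so `V t s = Dv t s 0` and `ad_A^j V(t,s) = Dv t s j`), each strongly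
continuous on `[0,T]²`.  `W j t s` is the `j`-fold iterated (strong) integral
`∫_s^t … ∫_s^{τ_{j−1}} V(τ₁,s)⋯V(τ_j,s) dτ_j…dτ₁`, defined recursively, and `Ω(t,s)`
is the sum of the norm-convergent Dyson series `Σ_j (−i)^j W j t s`.  Then
`Ω(t,s) ∈ C^k(A)` for all `(s,t) ∈ [0,T]²`. -/
theorem stmt_10 (A : H →ₗ.[ℂ] H) (hA : IsSelfAdjoint A) (k : ℕ)
    (T : ℝ) (hT : 0 < T)
    (Dv : ℝ → ℝ → ℕ → H →L[ℂ] H)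
    (hchain : ∀ t ∈ Icc (0:ℝ) T, ∀ s ∈ Icc (0:ℝ) T, ∀ j < k,
      IsCommutatorOf A (Dv t s j) (Dv t s (j + 1)))
    (hcont : ∀ j ≤ k, ∀ x : H,
      ContinuousOn (fun p : ℝ × ℝ => Dv p.1 p.2 j x) (Icc (0:ℝ) T ×ˢ Icc (0:ℝ) T))
    (W : ℕ → ℝ → ℝ → H →L[ℂ] H)
    (hW0 : ∀ t s : ℝ, W 0 t s = 1)
    (hWsucc : ∀ (j : ℕ) (t s : ℝ) (x : H),
      W (j + 1) t s x = ∫ τ in s..t, (Dv τ s 0) (W j τ s x))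
    (Ω : ℝ → ℝ → H →L[ℂ] H)
    (hΩ : ∀ t s : ℝ, HasSum (fun j : ℕ => ((-Complex.I) ^ j) • W j t s) (Ω t s)) :
    ∀ t ∈ Icc (0:ℝ) T, ∀ s ∈ Icc (0:ℝ) T, MemCk A (Ω t s) k := by
  intro t ht s hs
  -- Step 1: a uniform bound on the norms of the `Dv` over the box, via Banach–Steinhaus
  have hbox : IsCompact (Icc (0:ℝ) T ×ˢ Icc (0:ℝ) T) := isCompact_Icc.prod isCompact_Icc
  have hMj : ∀ j : ℕ, ∃ Mj : ℝ, j ≤ k →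
      ∀ t' ∈ Icc (0:ℝ) T, ∀ σ ∈ Icc (0:ℝ) T, ‖Dv t' σ j‖ ≤ Mj := by
    intro j
    by_cases hj : j ≤ k
    · obtain ⟨C, hC⟩ := banach_steinhaus
        (g := fun p : (Icc (0:ℝ) T ×ˢ Icc (0:ℝ) T : Set (ℝ×ℝ)) => Dv p.1.1 p.1.2 j)
        (by
          intro x
          obtain ⟨C, hC⟩ := hbox.exists_bound_of_continuousOn (hcont j hj x)
          exact ⟨C, fun p => hC p p.2⟩)
      exact ⟨C, fun _ t' ht' σ hσ => hC ⟨(t', σ), ⟨ht', hσ⟩⟩⟩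
    · exact ⟨0, fun h => absurd h hj⟩
  choose Mf hMf using hMj
  obtain ⟨M, hM0, hM⟩ : ∃ M : ℝ, 0 ≤ M ∧
      ∀ j ≤ k, ∀ t' ∈ Icc (0:ℝ) T, ∀ σ ∈ Icc (0:ℝ) T, ‖Dv t' σ j‖ ≤ M := by
    refine ⟨∑ i ∈ Finset.range (k+1), max (Mf i) 0,
      Finset.sum_nonneg (fun i _ => le_max_right _ _), ?_⟩
    intro j hj t' ht' σ hσ
    calc ‖Dv t' σ j‖ ≤ Mf j := hMf j hj t' ht' σ hσ
      _ ≤ max (Mf j) 0 := le_max_left _ _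
      _ ≤ ∑ i ∈ Finset.range (k+1), max (Mf i) 0 :=
          Finset.single_le_sum (f := fun i => max (Mf i) 0) (fun i _ => le_max_right _ _)
            (Finset.mem_range.mpr (Nat.lt_succ_of_le hj))
  have hprops := FF_props A hA k T Dv hchain hcont s hs M hM0 hM
  -- Step 2: bundle the iterated objects into continuous linear maps
  have hbundle : ∀ m j : ℕ, ∃ B : H →L[ℂ] H, m ≤ k →
      ((∀ x : H, B x = FF Dv s j m t x) ∧
        ‖B‖ ≤ ((2:ℝ)^k * M)^j * |t - s|^j / j.factorial) := by
    intro m j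
    by_cases hm : m ≤ k
    · obtain ⟨hcontm, hbd, hadd, hsmul, _⟩ := hprops j m hm
      refine ⟨LinearMap.mkContinuous
        { toFun := fun x => FF Dv s j m t x
          map_add' := fun x y => hadd t ht x y
          map_smul' := fun c x => hsmul t ht c x }
        (((2:ℝ)^k * M)^j * |t - s|^j / j.factorial) (fun x => hbd t ht x),
        fun _ => ⟨fun x => rfl, ?_⟩⟩
      exact LinearMap.mkContinuous_norm_le _ (by positivity) _
    · exact ⟨0, fun h => absurd h hm⟩
  choose adW hadW using hbundle
  -- Step 3: summability
  have habs : |t - s| ≤ T := by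
    rw [abs_le]; constructor <;> [linarith [ht.1, hs.2]; linarith [ht.2, hs.1]]
  have hsummable : ∀ m ≤ k, Summable (fun j : ℕ => ((-Complex.I)^j) • adW m j) := by
    intro m hm
    apply Summable.of_norm
    refine Summable.of_nonneg_of_le (fun j => norm_nonneg _) (fun j => ?_)
      (Real.summable_pow_div_factorial ((2:ℝ)^k * M * T))
    rw [norm_smul, norm_pow]
    have hni : ‖-Complex.I‖ = 1 := by simp
    rw [hni, one_pow, one_mul]
    calc ‖adW m j‖ ≤ ((2:ℝ)^k * M)^j * |t - s|^j / j.factorial := (hadW m j hm).2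
      _ ≤ ((2:ℝ)^k * M * T)^j / j.factorial := by
          have h1 : |t - s|^j ≤ T^j := pow_le_pow_left₀ (abs_nonneg _) habs j
          have h2 : (0:ℝ) ≤ j.factorial := by positivity
          have h3 : ((2:ℝ)^k * M * T)^j = ((2:ℝ)^k * M)^j * T^j := mul_pow _ _ _
          rw [h3]
          exact div_le_div_of_nonneg_right
            (mul_le_mul_of_nonneg_left h1 (by positivity)) h2
  set Dop : ℕ → H →L[ℂ] H := fun m => ∑' j, ((-Complex.I)^j) • adW m j with hDop
  have hHasSum : ∀ m ≤ k, HasSum (fun j : ℕ => ((-Complex.I)^j) • adW m j) (Dop m) :=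
    fun m hm => (hsummable m hm).hasSum
  -- Step 4: identification `FF 0 j = W j`
  have hFF0 : ∀ j : ℕ, ∀ t' ∈ Icc (0:ℝ) T, ∀ x : H, FF Dv s j 0 t' x = W j t' s x := by
    intro j
    induction j with
    | zero =>
      intro t' _ x
      rw [hW0]
      rfl
    | succ j ihj =>
      intro t' ht' x
      rw [hWsucc, FF_succ]
      apply intervalIntegral.integral_congr
      intro τ hτ
      have hτT : τ ∈ Icc (0:ℝ) T := uIcc_subset_Icc hs ht' hτ
      dsimp only [GG]
      rw [Finset.sum_range_one, ihj τ hτT x]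
      simp
  -- Step 5: `Dop 0 = Ω t s`
  have hD0 : Dop 0 = Ω t s := by
    have h1 : (fun j : ℕ => ((-Complex.I)^j) • adW 0 j)
        = (fun j : ℕ => ((-Complex.I)^j) • W j t s) := by
      funext j
      congr 1
      ext x
      rw [(hadW 0 j (Nat.zero_le k)).1 x, hFF0 j t ht x]
    have h2 := hHasSum 0 (Nat.zero_le k)
    rw [h1] at h2
    exact h2.unique (hΩ t s)
  -- Step 6: conclude
  refine ⟨Dop, hD0, ?_⟩
  intro m hmk x y
  have happly : ∀ m' ≤ k, ∀ v : H,
      HasSum (fun j : ℕ => ((-Complex.I)^j) • (adW m' j v)) (Dop m' v) := by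
    intro m' hm' v
    have h := (ContinuousLinearMap.apply ℂ H v).hasSum (hHasSum m' hm')
    simpa using h
  have hsum1 : HasSum (fun j : ℕ => ((-Complex.I)^j) * (inner ℂ ((A x : H)) (adW m j (y:H)) : ℂ))
      (inner ℂ ((A x : H)) (Dop m (y:H)) : ℂ) := by
    have h := (innerSL ℂ ((A x : H))).hasSum (happly m (le_of_lt hmk) (y:H))
    simpa [inner_smul_right] using h
  have hsum2 : HasSum (fun j : ℕ => ((-Complex.I)^j) * (inner ℂ ((x:H)) (adW m j (A y)) : ℂ))
      (inner ℂ ((x:H)) (Dop m (A y)) : ℂ) := by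
    have h := (innerSL ℂ ((x:H))).hasSum (happly m (le_of_lt hmk) (A y))
    simpa [inner_smul_right] using h
  have hsum3 : HasSum (fun j : ℕ => ((-Complex.I)^j) * (inner ℂ ((x:H)) (adW (m+1) j (y:H)) : ℂ))
      (inner ℂ ((x:H)) (Dop (m+1) (y:H)) : ℂ) := by
    have h := (innerSL ℂ ((x:H))).hasSum (happly (m+1) hmk (y:H))
    simpa [inner_smul_right] using h
  have hsub := hsum1.sub hsum2
  have heq : (fun j : ℕ => ((-Complex.I)^j) * (inner ℂ ((A x : H)) (adW m j (y:H)) : ℂ)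
        - ((-Complex.I)^j) * (inner ℂ ((x:H)) (adW m j (A y)) : ℂ))
      = (fun j : ℕ => ((-Complex.I)^j) * (inner ℂ ((x:H)) (adW (m+1) j (y:H)) : ℂ)) := by
    funext j
    have hcm := (hprops j m (le_of_lt hmk)).2.2.2.2 hmk t ht x y
    rw [(hadW m j (le_of_lt hmk)).1, (hadW m j (le_of_lt hmk)).1,
      (hadW (m+1) j hmk).1]
    rw [← mul_sub, hcm]
  rw [heq] at hsub
  exact hsub.unique hsum3
end
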